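/- arXiv:2112.06983 — 3 statements merged into one kernel-verified Lean document; each statement's English description precedes it below -/
import Mathlib

section
/- For every natural number s, the number of nonnegative integer solutions (x_1,…,x_5) of x_1 + x_2 + 2x_3 + 2x_4 + 3x_5 = s (i.e. W(s, (1,2)⧺(1,2,3))) satisfies, as an identity of real numbers: W(s, (1,1,2,2,3)) = (s⁴ + 18s³ + 112s² + 279s + 220)/288 + 37/1728 + ((2s+9)/64)·cos(πs) + (2/27)·cos(2πs/3). -/
open Finset

/-- `W t d` : the number of tuples `x` of nonnegative integers with `∑ i, d i * x i = t`. -/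
noncomputable def W (t : ℤ) (d : List ℕ) : ℕ :=
  Nat.card {x : Fin d.length → ℕ // ∑ i, (d.get i : ℤ) * (x i : ℤ) = t}

/-- `Wm j t` : the restricted partition function `W(t, (1,2,…,j))`. -/
noncomputable def Wm (j : ℕ) (t : ℤ) : ℕ :=
  W t ((List.range j).map (· + 1))

/-- `P m n s` : the Gaussian polynomial coefficient, i.e. the number of tuples
`(x_1,…,x_m)` of nonnegative integers with `∑ i, i * x_i = s` and `∑ i, x_i ≤ n`. -/
noncomputable def P (m n s : ℕ) : ℕ :=
  Nat.card {x : Fin m → ℕ // (∑ i : Fin m, ((i : ℕ) + 1) * x i = s) ∧ ∑ i, x i ≤ n}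

/-- `tri j = j(j+1)/2`, the `j`-th triangular number. -/
def tri (j : ℕ) : ℕ := j * (j + 1) / 2

open Real


lemma sum_cons_aux (a : ℕ) (d : List ℕ) (x : Fin (d.length + 1) → ℕ) :
    ∑ i : Fin (d.length + 1), ((a :: d).get i : ℤ) * (x i : ℤ)
      = (a : ℤ) * (x 0 : ℤ) + ∑ i : Fin d.length, (d.get i : ℤ) * (x i.succ : ℤ) := by
  rw [Fin.sum_univ_succ]
  simp

def consEquiv (a : ℕ) (ha : 0 < a) (d : List ℕ) (t : ℤ) :
    {x : Fin (d.length + 1) → ℕ // ∑ i : Fin (d.length + 1), ((a :: d).get i : ℤ) * (x i : ℤ) = t}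
      ≃ {x : Fin (d.length + 1) → ℕ // ∑ i : Fin (d.length + 1), ((a :: d).get i : ℤ) * (x i : ℤ) = t - a}
        ⊕ {y : Fin d.length → ℕ // ∑ i, (d.get i : ℤ) * (y i : ℤ) = t} where
  toFun x :=
    if h : x.1 0 = 0 then
      Sum.inr ⟨fun i => x.1 i.succ, by
        have hx := x.2
        rw [sum_cons_aux] at hx
        rw [h] at hx
        simpa using hx⟩
    else
      Sum.inl ⟨Fin.cons (x.1 0 - 1) (fun i => x.1 i.succ), by
        have hx := x.2
        rw [sum_cons_aux] at hx
        rw [sum_cons_aux]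
        simp only [Fin.cons_zero, Fin.cons_succ]
        have h1 : (1:ℕ) ≤ x.1 0 := Nat.one_le_iff_ne_zero.2 h
        push_cast [Nat.cast_sub h1]
        push_cast at hx
        linarith⟩
  invFun z :=
    match z with
    | Sum.inl y => ⟨Fin.cons (y.1 0 + 1) (fun i => y.1 i.succ), by
        have hy := y.2
        rw [sum_cons_aux] at hy
        rw [sum_cons_aux]
        simp only [Fin.cons_zero, Fin.cons_succ]
        push_cast
        push_cast at hy
        linarith⟩
    | Sum.inr y => ⟨Fin.cons 0 y.1, by
        have hy := y.2
        rw [sum_cons_aux]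
        simp only [Fin.cons_zero, Fin.cons_succ]
        simpa using hy⟩
  left_inv x := by
    by_cases h : x.1 0 = 0
    · simp only [h, dif_pos]
      apply Subtype.ext
      funext i
      refine Fin.cases ?_ ?_ i
      · simp [h.symm]
      · intro j; simp
    · simp only [h, dif_neg, not_false_iff]
      apply Subtype.ext
      funext i
      refine Fin.cases ?_ ?_ i
      · simp only [Fin.cons_zero]
        omega
      · intro j; simp
  right_inv z := by
    match z with
    | Sum.inl y =>
      have h : (Fin.cons (y.1 0 + 1) (fun i => y.1 i.succ) : Fin (d.length + 1) → ℕ) 0 ≠ 0 := by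
        simp
      simp only [dif_neg h]
      congr 1
      apply Subtype.ext
      funext i
      refine Fin.cases ?_ ?_ i
      · simp
      · intro j; simp
    | Sum.inr y =>
      have h : (Fin.cons 0 y.1 : Fin (d.length + 1) → ℕ) 0 = 0 := by simp
      simp only [dif_pos h]
      congr 1

lemma Wnil (t : ℤ) : W t [] = if t = 0 then 1 else 0 := by
  unfold W
  split
  · subst ‹t = 0›
    rw [Nat.card_eq_one_iff_unique]
    constructor
    · constructor
      rintro ⟨x, hx⟩ ⟨y, hy⟩
      ext i
      exact absurd i.2 (by simp)
    · exact ⟨⟨fun i => 0, by simp⟩⟩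
  · rw [Nat.card_eq_zero]
    left
    refine ⟨fun x => ?_⟩
    obtain ⟨x, hx⟩ := x
    simp at hx
    exact ‹t ≠ 0› hx.symm

lemma Wneg (t : ℤ) (ht : t < 0) (d : List ℕ) : W t d = 0 := by
  unfold W
  rw [Nat.card_eq_zero]
  left
  refine ⟨fun x => ?_⟩
  obtain ⟨x, hx⟩ := x
  have : (0:ℤ) ≤ ∑ i, (d.get i : ℤ) * (x i : ℤ) := by positivity
  omega

lemma finite_sol (t : ℤ) (d : List ℕ) (hd : ∀ b ∈ d, 0 < b) :
    Finite {x : Fin d.length → ℕ // ∑ i, (d.get i : ℤ) * (x i : ℤ) = t} := by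
  have key : ∀ x : {x : Fin d.length → ℕ // ∑ i, (d.get i : ℤ) * (x i : ℤ) = t},
      ∀ i, x.1 i < t.toNat + 1 := by
    intro x i
    have hx := x.2
    have h1 : (1:ℤ) ≤ (d.get i : ℤ) := by
      exact_mod_cast hd _ (List.get_mem d i)
    have h2 : (x.1 i : ℤ) ≤ (d.get i : ℤ) * (x.1 i : ℤ) :=
      le_mul_of_one_le_left (by positivity) h1
    have h3 : (d.get i : ℤ) * (x.1 i : ℤ) ≤ ∑ j, (d.get j : ℤ) * (x.1 j : ℤ) :=
      Finset.single_le_sum (f := fun j => (d.get j : ℤ) * (x.1 j : ℤ))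
        (fun j _ => by positivity) (Finset.mem_univ i)
    have h4 : (x.1 i : ℤ) ≤ t := by rw [hx] at h3; omega
    omega
  refine Finite.of_injective
    (fun x => (fun i => (⟨x.1 i, key x i⟩ : Fin (t.toNat + 1)) : Fin d.length → Fin (t.toNat+1)))
    ?_
  rintro ⟨x, hx⟩ ⟨y, hy⟩ h
  ext i
  exact congrArg Fin.val (congrFun h i)

lemma Wcons (a : ℕ) (ha : 0 < a) (d : List ℕ) (hd : ∀ b ∈ d, 0 < b) (t : ℤ) :
    W t (a :: d) = W (t - a) (a :: d) + W t d := by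
  have hd' : ∀ b ∈ (a :: d), 0 < b := by
    intro b hb
    rcases List.mem_cons.1 hb with h | h
    · omega
    · exact hd b h
  haveI f1 := finite_sol (t - a) (a :: d) hd'
  haveI f2 := finite_sol t d hd
  unfold W
  rw [← Nat.card_sum]
  exact Nat.card_congr (consEquiv a ha d t)

lemma rA (t : ℤ) : (W t [1,2,1,2,3] : ℤ) = (W (t-1) [1,2,1,2,3] : ℤ) + (W t [2,1,2,3] : ℤ) := by
  have h := Wcons 1 one_pos [2,1,2,3] (by norm_num) t
  norm_num at h
  exact_mod_cast h

lemma rB (t : ℤ) : (W t [2,1,2,3] : ℤ) = (W (t-2) [2,1,2,3] : ℤ) + (W t [1,2,3] : ℤ) := by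
  have h := Wcons 2 (by norm_num) [1,2,3] (by norm_num) t
  norm_num at h
  exact_mod_cast h

lemma rC (t : ℤ) : (W t [1,2,3] : ℤ) = (W (t-1) [1,2,3] : ℤ) + (W t [2,3] : ℤ) := by
  have h := Wcons 1 one_pos [2,3] (by norm_num) t
  norm_num at h
  exact_mod_cast h

lemma rD (t : ℤ) : (W t [2,3] : ℤ) = (W (t-2) [2,3] : ℤ) + (W t [3] : ℤ) := by
  have h := Wcons 2 (by norm_num) [3] (by norm_num) t
  norm_num at h
  exact_mod_cast h

lemma rE (t : ℤ) : (W t [3] : ℤ) = (W (t-3) [3] : ℤ) + (if t = 0 then 1 else 0) := by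
  have h := Wcons 3 (by norm_num) [] (by simp) t
  rw [Wnil] at h
  norm_num at h
  split_ifs with h0
  · rw [if_pos h0] at h; exact_mod_cast h
  · rw [if_neg h0] at h; push_cast [h]; ring
lemma vE0 : (W (0:ℤ) [3] : ℤ) = 1 := by
  rw [rE]; norm_num [Wneg]

lemma vE1 : (W (1:ℤ) [3] : ℤ) = 0 := by
  rw [rE]; norm_num [Wneg, vE0]

lemma vE2 : (W (2:ℤ) [3] : ℤ) = 0 := by
  rw [rE]; norm_num [Wneg, vE0, vE1]

lemma vE3 : (W (3:ℤ) [3] : ℤ) = 1 := by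
  rw [rE]; norm_num [Wneg, vE0, vE1, vE2]

lemma vE4 : (W (4:ℤ) [3] : ℤ) = 0 := by
  rw [rE]; norm_num [Wneg, vE0, vE1, vE2, vE3]

lemma vE5 : (W (5:ℤ) [3] : ℤ) = 0 := by
  rw [rE]; norm_num [Wneg, vE0, vE1, vE2, vE3, vE4]

lemma vE6 : (W (6:ℤ) [3] : ℤ) = 1 := by
  rw [rE]; norm_num [Wneg, vE0, vE1, vE2, vE3, vE4, vE5]

lemma vE7 : (W (7:ℤ) [3] : ℤ) = 0 := by
  rw [rE]; norm_num [Wneg, vE0, vE1, vE2, vE3, vE4, vE5, vE6]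

lemma vE8 : (W (8:ℤ) [3] : ℤ) = 0 := by
  rw [rE]; norm_num [Wneg, vE0, vE1, vE2, vE3, vE4, vE5, vE6, vE7]

lemma vD0 : (W (0:ℤ) [2,3] : ℤ) = 1 := by
  rw [rD]; norm_num [Wneg, vE0, vE1, vE2, vE3, vE4, vE5, vE6, vE7, vE8]

lemma vD1 : (W (1:ℤ) [2,3] : ℤ) = 0 := by
  rw [rD]; norm_num [Wneg, vE0, vE1, vE2, vE3, vE4, vE5, vE6, vE7, vE8, vD0]

lemma vD2 : (W (2:ℤ) [2,3] : ℤ) = 1 := by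
  rw [rD]; norm_num [Wneg, vE0, vE1, vE2, vE3, vE4, vE5, vE6, vE7, vE8, vD0, vD1]

lemma vD3 : (W (3:ℤ) [2,3] : ℤ) = 1 := by
  rw [rD]; norm_num [Wneg, vE0, vE1, vE2, vE3, vE4, vE5, vE6, vE7, vE8, vD0, vD1, vD2]

lemma vD4 : (W (4:ℤ) [2,3] : ℤ) = 1 := by
  rw [rD]; norm_num [Wneg, vE0, vE1, vE2, vE3, vE4, vE5, vE6, vE7, vE8, vD0, vD1, vD2, vD3]

lemma vD5 : (W (5:ℤ) [2,3] : ℤ) = 1 := by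
  rw [rD]; norm_num [Wneg, vE0, vE1, vE2, vE3, vE4, vE5, vE6, vE7, vE8, vD0, vD1, vD2, vD3, vD4]

lemma vD6 : (W (6:ℤ) [2,3] : ℤ) = 2 := by
  rw [rD]; norm_num [Wneg, vE0, vE1, vE2, vE3, vE4, vE5, vE6, vE7, vE8, vD0, vD1, vD2, vD3, vD4, vD5]

lemma vD7 : (W (7:ℤ) [2,3] : ℤ) = 1 := by
  rw [rD]; norm_num [Wneg, vE0, vE1, vE2, vE3, vE4, vE5, vE6, vE7, vE8, vD0, vD1, vD2, vD3, vD4, vD5, vD6]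

lemma vD8 : (W (8:ℤ) [2,3] : ℤ) = 2 := by
  rw [rD]; norm_num [Wneg, vE0, vE1, vE2, vE3, vE4, vE5, vE6, vE7, vE8, vD0, vD1, vD2, vD3, vD4, vD5, vD6, vD7]

lemma vC0 : (W (0:ℤ) [1,2,3] : ℤ) = 1 := by
  rw [rC]; norm_num [Wneg, vE0, vE1, vE2, vE3, vE4, vE5, vE6, vE7, vE8, vD0, vD1, vD2, vD3, vD4, vD5, vD6, vD7, vD8]

lemma vC1 : (W (1:ℤ) [1,2,3] : ℤ) = 1 := by
  rw [rC]; norm_num [Wneg, vE0, vE1, vE2, vE3, vE4, vE5, vE6, vE7, vE8, vD0, vD1, vD2, vD3, vD4, vD5, vD6, vD7, vD8, vC0]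

lemma vC2 : (W (2:ℤ) [1,2,3] : ℤ) = 2 := by
  rw [rC]; norm_num [Wneg, vE0, vE1, vE2, vE3, vE4, vE5, vE6, vE7, vE8, vD0, vD1, vD2, vD3, vD4, vD5, vD6, vD7, vD8, vC0, vC1]

lemma vC3 : (W (3:ℤ) [1,2,3] : ℤ) = 3 := by
  rw [rC]; norm_num [Wneg, vE0, vE1, vE2, vE3, vE4, vE5, vE6, vE7, vE8, vD0, vD1, vD2, vD3, vD4, vD5, vD6, vD7, vD8, vC0, vC1, vC2]

lemma vC4 : (W (4:ℤ) [1,2,3] : ℤ) = 4 := by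
  rw [rC]; norm_num [Wneg, vE0, vE1, vE2, vE3, vE4, vE5, vE6, vE7, vE8, vD0, vD1, vD2, vD3, vD4, vD5, vD6, vD7, vD8, vC0, vC1, vC2, vC3]

lemma vC5 : (W (5:ℤ) [1,2,3] : ℤ) = 5 := by
  rw [rC]; norm_num [Wneg, vE0, vE1, vE2, vE3, vE4, vE5, vE6, vE7, vE8, vD0, vD1, vD2, vD3, vD4, vD5, vD6, vD7, vD8, vC0, vC1, vC2, vC3, vC4]

lemma vC6 : (W (6:ℤ) [1,2,3] : ℤ) = 7 := by
  rw [rC]; norm_num [Wneg, vE0, vE1, vE2, vE3, vE4, vE5, vE6, vE7, vE8, vD0, vD1, vD2, vD3, vD4, vD5, vD6, vD7, vD8, vC0, vC1, vC2, vC3, vC4, vC5]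

lemma vC7 : (W (7:ℤ) [1,2,3] : ℤ) = 8 := by
  rw [rC]; norm_num [Wneg, vE0, vE1, vE2, vE3, vE4, vE5, vE6, vE7, vE8, vD0, vD1, vD2, vD3, vD4, vD5, vD6, vD7, vD8, vC0, vC1, vC2, vC3, vC4, vC5, vC6]

lemma vC8 : (W (8:ℤ) [1,2,3] : ℤ) = 10 := by
  rw [rC]; norm_num [Wneg, vE0, vE1, vE2, vE3, vE4, vE5, vE6, vE7, vE8, vD0, vD1, vD2, vD3, vD4, vD5, vD6, vD7, vD8, vC0, vC1, vC2, vC3, vC4, vC5, vC6, vC7]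

lemma vB0 : (W (0:ℤ) [2,1,2,3] : ℤ) = 1 := by
  rw [rB]; norm_num [Wneg, vE0, vE1, vE2, vE3, vE4, vE5, vE6, vE7, vE8, vD0, vD1, vD2, vD3, vD4, vD5, vD6, vD7, vD8, vC0, vC1, vC2, vC3, vC4, vC5, vC6, vC7, vC8]

lemma vB1 : (W (1:ℤ) [2,1,2,3] : ℤ) = 1 := by
  rw [rB]; norm_num [Wneg, vE0, vE1, vE2, vE3, vE4, vE5, vE6, vE7, vE8, vD0, vD1, vD2, vD3, vD4, vD5, vD6, vD7, vD8, vC0, vC1, vC2, vC3, vC4, vC5, vC6, vC7, vC8, vB0]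

lemma vB2 : (W (2:ℤ) [2,1,2,3] : ℤ) = 3 := by
  rw [rB]; norm_num [Wneg, vE0, vE1, vE2, vE3, vE4, vE5, vE6, vE7, vE8, vD0, vD1, vD2, vD3, vD4, vD5, vD6, vD7, vD8, vC0, vC1, vC2, vC3, vC4, vC5, vC6, vC7, vC8, vB0, vB1]

lemma vB3 : (W (3:ℤ) [2,1,2,3] : ℤ) = 4 := by
  rw [rB]; norm_num [Wneg, vE0, vE1, vE2, vE3, vE4, vE5, vE6, vE7, vE8, vD0, vD1, vD2, vD3, vD4, vD5, vD6, vD7, vD8, vC0, vC1, vC2, vC3, vC4, vC5, vC6, vC7, vC8, vB0, vB1, vB2]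

lemma vB4 : (W (4:ℤ) [2,1,2,3] : ℤ) = 7 := by
  rw [rB]; norm_num [Wneg, vE0, vE1, vE2, vE3, vE4, vE5, vE6, vE7, vE8, vD0, vD1, vD2, vD3, vD4, vD5, vD6, vD7, vD8, vC0, vC1, vC2, vC3, vC4, vC5, vC6, vC7, vC8, vB0, vB1, vB2, vB3]

lemma vB5 : (W (5:ℤ) [2,1,2,3] : ℤ) = 9 := by
  rw [rB]; norm_num [Wneg, vE0, vE1, vE2, vE3, vE4, vE5, vE6, vE7, vE8, vD0, vD1, vD2, vD3, vD4, vD5, vD6, vD7, vD8, vC0, vC1, vC2, vC3, vC4, vC5, vC6, vC7, vC8, vB0, vB1, vB2, vB3, vB4]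

lemma vB6 : (W (6:ℤ) [2,1,2,3] : ℤ) = 14 := by
  rw [rB]; norm_num [Wneg, vE0, vE1, vE2, vE3, vE4, vE5, vE6, vE7, vE8, vD0, vD1, vD2, vD3, vD4, vD5, vD6, vD7, vD8, vC0, vC1, vC2, vC3, vC4, vC5, vC6, vC7, vC8, vB0, vB1, vB2, vB3, vB4, vB5]

lemma vB7 : (W (7:ℤ) [2,1,2,3] : ℤ) = 17 := by
  rw [rB]; norm_num [Wneg, vE0, vE1, vE2, vE3, vE4, vE5, vE6, vE7, vE8, vD0, vD1, vD2, vD3, vD4, vD5, vD6, vD7, vD8, vC0, vC1, vC2, vC3, vC4, vC5, vC6, vC7, vC8, vB0, vB1, vB2, vB3, vB4, vB5, vB6]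

lemma vB8 : (W (8:ℤ) [2,1,2,3] : ℤ) = 24 := by
  rw [rB]; norm_num [Wneg, vE0, vE1, vE2, vE3, vE4, vE5, vE6, vE7, vE8, vD0, vD1, vD2, vD3, vD4, vD5, vD6, vD7, vD8, vC0, vC1, vC2, vC3, vC4, vC5, vC6, vC7, vC8, vB0, vB1, vB2, vB3, vB4, vB5, vB6, vB7]

lemma vA0 : (W (0:ℤ) [1,2,1,2,3] : ℤ) = 1 := by
  rw [rA]; norm_num [Wneg, vE0, vE1, vE2, vE3, vE4, vE5, vE6, vE7, vE8, vD0, vD1, vD2, vD3, vD4, vD5, vD6, vD7, vD8, vC0, vC1, vC2, vC3, vC4, vC5, vC6, vC7, vC8, vB0, vB1, vB2, vB3, vB4, vB5, vB6, vB7, vB8]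

lemma vA1 : (W (1:ℤ) [1,2,1,2,3] : ℤ) = 2 := by
  rw [rA]; norm_num [Wneg, vE0, vE1, vE2, vE3, vE4, vE5, vE6, vE7, vE8, vD0, vD1, vD2, vD3, vD4, vD5, vD6, vD7, vD8, vC0, vC1, vC2, vC3, vC4, vC5, vC6, vC7, vC8, vB0, vB1, vB2, vB3, vB4, vB5, vB6, vB7, vB8, vA0]

lemma vA2 : (W (2:ℤ) [1,2,1,2,3] : ℤ) = 5 := by
  rw [rA]; norm_num [Wneg, vE0, vE1, vE2, vE3, vE4, vE5, vE6, vE7, vE8, vD0, vD1, vD2, vD3, vD4, vD5, vD6, vD7, vD8, vC0, vC1, vC2, vC3, vC4, vC5, vC6, vC7, vC8, vB0, vB1, vB2, vB3, vB4, vB5, vB6, vB7, vB8, vA0, vA1]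

lemma vA3 : (W (3:ℤ) [1,2,1,2,3] : ℤ) = 9 := by
  rw [rA]; norm_num [Wneg, vE0, vE1, vE2, vE3, vE4, vE5, vE6, vE7, vE8, vD0, vD1, vD2, vD3, vD4, vD5, vD6, vD7, vD8, vC0, vC1, vC2, vC3, vC4, vC5, vC6, vC7, vC8, vB0, vB1, vB2, vB3, vB4, vB5, vB6, vB7, vB8, vA0, vA1, vA2]

lemma vA4 : (W (4:ℤ) [1,2,1,2,3] : ℤ) = 16 := by
  rw [rA]; norm_num [Wneg, vE0, vE1, vE2, vE3, vE4, vE5, vE6, vE7, vE8, vD0, vD1, vD2, vD3, vD4, vD5, vD6, vD7, vD8, vC0, vC1, vC2, vC3, vC4, vC5, vC6, vC7, vC8, vB0, vB1, vB2, vB3, vB4, vB5, vB6, vB7, vB8, vA0, vA1, vA2, vA3]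

lemma vA5 : (W (5:ℤ) [1,2,1,2,3] : ℤ) = 25 := by
  rw [rA]; norm_num [Wneg, vE0, vE1, vE2, vE3, vE4, vE5, vE6, vE7, vE8, vD0, vD1, vD2, vD3, vD4, vD5, vD6, vD7, vD8, vC0, vC1, vC2, vC3, vC4, vC5, vC6, vC7, vC8, vB0, vB1, vB2, vB3, vB4, vB5, vB6, vB7, vB8, vA0, vA1, vA2, vA3, vA4]

lemma vA6 : (W (6:ℤ) [1,2,1,2,3] : ℤ) = 39 := by
  rw [rA]; norm_num [Wneg, vE0, vE1, vE2, vE3, vE4, vE5, vE6, vE7, vE8, vD0, vD1, vD2, vD3, vD4, vD5, vD6, vD7, vD8, vC0, vC1, vC2, vC3, vC4, vC5, vC6, vC7, vC8, vB0, vB1, vB2, vB3, vB4, vB5, vB6, vB7, vB8, vA0, vA1, vA2, vA3, vA4, vA5]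

lemma vA7 : (W (7:ℤ) [1,2,1,2,3] : ℤ) = 56 := by
  rw [rA]; norm_num [Wneg, vE0, vE1, vE2, vE3, vE4, vE5, vE6, vE7, vE8, vD0, vD1, vD2, vD3, vD4, vD5, vD6, vD7, vD8, vC0, vC1, vC2, vC3, vC4, vC5, vC6, vC7, vC8, vB0, vB1, vB2, vB3, vB4, vB5, vB6, vB7, vB8, vA0, vA1, vA2, vA3, vA4, vA5, vA6]

lemma vA8 : (W (8:ℤ) [1,2,1,2,3] : ℤ) = 80 := by
  rw [rA]; norm_num [Wneg, vE0, vE1, vE2, vE3, vE4, vE5, vE6, vE7, vE8, vD0, vD1, vD2, vD3, vD4, vD5, vD6, vD7, vD8, vC0, vC1, vC2, vC3, vC4, vC5, vC6, vC7, vC8, vB0, vB1, vB2, vB3, vB4, vB5, vB6, vB7, vB8, vA0, vA1, vA2, vA3, vA4, vA5, vA6, vA7]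
lemma keyA (t : ℤ) (ht : 9 ≤ t) :
    (W t [1,2,1,2,3] : ℤ) = 2*(W (t-1) [1,2,1,2,3]:ℤ) + (W (t-2) [1,2,1,2,3]:ℤ) - 3*(W (t-3) [1,2,1,2,3]:ℤ) - (W (t-4) [1,2,1,2,3]:ℤ) + (W (t-5) [1,2,1,2,3]:ℤ) + 3*(W (t-6) [1,2,1,2,3]:ℤ) - (W (t-7) [1,2,1,2,3]:ℤ) - 2*(W (t-8) [1,2,1,2,3]:ℤ) + (W (t-9) [1,2,1,2,3]:ℤ) := by
  have hA0 : (W (t) [1,2,1,2,3] : ℤ) = (W (t-1) [1,2,1,2,3] : ℤ) + (W (t) [2,1,2,3] : ℤ) := by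
    have h := rA (t)
    rw [show (t)-1 = t-1 by ring] at h
    exact h
  have hA1 : (W (t-1) [1,2,1,2,3] : ℤ) = (W (t-2) [1,2,1,2,3] : ℤ) + (W (t-1) [2,1,2,3] : ℤ) := by
    have h := rA (t-1)
    rw [show (t-1)-1 = t-2 by ring] at h
    exact h
  have hA2 : (W (t-2) [1,2,1,2,3] : ℤ) = (W (t-3) [1,2,1,2,3] : ℤ) + (W (t-2) [2,1,2,3] : ℤ) := by
    have h := rA (t-2)
    rw [show (t-2)-1 = t-3 by ring] at h
    exact h
  have hA3 : (W (t-3) [1,2,1,2,3] : ℤ) = (W (t-4) [1,2,1,2,3] : ℤ) + (W (t-3) [2,1,2,3] : ℤ) := by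
    have h := rA (t-3)
    rw [show (t-3)-1 = t-4 by ring] at h
    exact h
  have hA4 : (W (t-4) [1,2,1,2,3] : ℤ) = (W (t-5) [1,2,1,2,3] : ℤ) + (W (t-4) [2,1,2,3] : ℤ) := by
    have h := rA (t-4)
    rw [show (t-4)-1 = t-5 by ring] at h
    exact h
  have hA5 : (W (t-5) [1,2,1,2,3] : ℤ) = (W (t-6) [1,2,1,2,3] : ℤ) + (W (t-5) [2,1,2,3] : ℤ) := by
    have h := rA (t-5)
    rw [show (t-5)-1 = t-6 by ring] at h
    exact h
  have hA6 : (W (t-6) [1,2,1,2,3] : ℤ) = (W (t-7) [1,2,1,2,3] : ℤ) + (W (t-6) [2,1,2,3] : ℤ) := by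
    have h := rA (t-6)
    rw [show (t-6)-1 = t-7 by ring] at h
    exact h
  have hA7 : (W (t-7) [1,2,1,2,3] : ℤ) = (W (t-8) [1,2,1,2,3] : ℤ) + (W (t-7) [2,1,2,3] : ℤ) := by
    have h := rA (t-7)
    rw [show (t-7)-1 = t-8 by ring] at h
    exact h
  have hA8 : (W (t-8) [1,2,1,2,3] : ℤ) = (W (t-9) [1,2,1,2,3] : ℤ) + (W (t-8) [2,1,2,3] : ℤ) := by
    have h := rA (t-8)
    rw [show (t-8)-1 = t-9 by ring] at h
    exact h
  have hB0 : (W (t) [2,1,2,3] : ℤ) = (W (t-2) [2,1,2,3] : ℤ) + (W (t) [1,2,3] : ℤ) := by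
    have h := rB (t)
    rw [show (t)-2 = t-2 by ring] at h
    exact h
  have hB1 : (W (t-1) [2,1,2,3] : ℤ) = (W (t-3) [2,1,2,3] : ℤ) + (W (t-1) [1,2,3] : ℤ) := by
    have h := rB (t-1)
    rw [show (t-1)-2 = t-3 by ring] at h
    exact h
  have hB2 : (W (t-2) [2,1,2,3] : ℤ) = (W (t-4) [2,1,2,3] : ℤ) + (W (t-2) [1,2,3] : ℤ) := by
    have h := rB (t-2)
    rw [show (t-2)-2 = t-4 by ring] at h
    exact h
  have hB3 : (W (t-3) [2,1,2,3] : ℤ) = (W (t-5) [2,1,2,3] : ℤ) + (W (t-3) [1,2,3] : ℤ) := by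
    have h := rB (t-3)
    rw [show (t-3)-2 = t-5 by ring] at h
    exact h
  have hB4 : (W (t-4) [2,1,2,3] : ℤ) = (W (t-6) [2,1,2,3] : ℤ) + (W (t-4) [1,2,3] : ℤ) := by
    have h := rB (t-4)
    rw [show (t-4)-2 = t-6 by ring] at h
    exact h
  have hB5 : (W (t-5) [2,1,2,3] : ℤ) = (W (t-7) [2,1,2,3] : ℤ) + (W (t-5) [1,2,3] : ℤ) := by
    have h := rB (t-5)
    rw [show (t-5)-2 = t-7 by ring] at h
    exact h
  have hB6 : (W (t-6) [2,1,2,3] : ℤ) = (W (t-8) [2,1,2,3] : ℤ) + (W (t-6) [1,2,3] : ℤ) := by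
    have h := rB (t-6)
    rw [show (t-6)-2 = t-8 by ring] at h
    exact h
  have hC0 : (W (t) [1,2,3] : ℤ) = (W (t-1) [1,2,3] : ℤ) + (W (t) [2,3] : ℤ) := by
    have h := rC (t)
    rw [show (t)-1 = t-1 by ring] at h
    exact h
  have hC1 : (W (t-1) [1,2,3] : ℤ) = (W (t-2) [1,2,3] : ℤ) + (W (t-1) [2,3] : ℤ) := by
    have h := rC (t-1)
    rw [show (t-1)-1 = t-2 by ring] at h
    exact h
  have hC2 : (W (t-2) [1,2,3] : ℤ) = (W (t-3) [1,2,3] : ℤ) + (W (t-2) [2,3] : ℤ) := by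
    have h := rC (t-2)
    rw [show (t-2)-1 = t-3 by ring] at h
    exact h
  have hC3 : (W (t-3) [1,2,3] : ℤ) = (W (t-4) [1,2,3] : ℤ) + (W (t-3) [2,3] : ℤ) := by
    have h := rC (t-3)
    rw [show (t-3)-1 = t-4 by ring] at h
    exact h
  have hC4 : (W (t-4) [1,2,3] : ℤ) = (W (t-5) [1,2,3] : ℤ) + (W (t-4) [2,3] : ℤ) := by
    have h := rC (t-4)
    rw [show (t-4)-1 = t-5 by ring] at h
    exact h
  have hC5 : (W (t-5) [1,2,3] : ℤ) = (W (t-6) [1,2,3] : ℤ) + (W (t-5) [2,3] : ℤ) := by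
    have h := rC (t-5)
    rw [show (t-5)-1 = t-6 by ring] at h
    exact h
  have hD0 : (W (t) [2,3] : ℤ) = (W (t-2) [2,3] : ℤ) + (W (t) [3] : ℤ) := by
    have h := rD (t)
    rw [show (t)-2 = t-2 by ring] at h
    exact h
  have hD1 : (W (t-1) [2,3] : ℤ) = (W (t-3) [2,3] : ℤ) + (W (t-1) [3] : ℤ) := by
    have h := rD (t-1)
    rw [show (t-1)-2 = t-3 by ring] at h
    exact h
  have hD2 : (W (t-2) [2,3] : ℤ) = (W (t-4) [2,3] : ℤ) + (W (t-2) [3] : ℤ) := by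
    have h := rD (t-2)
    rw [show (t-2)-2 = t-4 by ring] at h
    exact h
  have hD3 : (W (t-3) [2,3] : ℤ) = (W (t-5) [2,3] : ℤ) + (W (t-3) [3] : ℤ) := by
    have h := rD (t-3)
    rw [show (t-3)-2 = t-5 by ring] at h
    exact h
  have hE0 : (W t [3] : ℤ) = (W (t-3) [3] : ℤ) := by
    have h := rE t
    rw [if_neg (by omega), add_zero] at h
    exact h
  linarith [hA0, hA1, hA2, hA3, hA4, hA5, hA6, hA7, hA8, hB0, hB1, hB2, hB3, hB4, hB5, hB6, hC0, hC1, hC2, hC3, hC4, hC5, hD0, hD1, hD2, hD3, hE0]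



noncomputable def F (x : ℝ) : ℝ :=
  (x ^ 4 + 18 * x ^ 3 + 112 * x ^ 2 + 279 * x + 220) / 288 + 37 / 1728
    + ((2 * x + 9) / 64) * Real.cos (Real.pi * x)
    + (2 / 27) * Real.cos (2 * Real.pi * x / 3)

lemma cos23 : Real.cos (2 * Real.pi / 3) = -(1/2) := by
  rw [show 2 * Real.pi / 3 = Real.pi - Real.pi / 3 by ring, Real.cos_pi_sub,
    Real.cos_pi_div_three]

lemma sin23 : Real.sin (2 * Real.pi / 3) = Real.sqrt 3 / 2 := by
  rw [show 2 * Real.pi / 3 = Real.pi - Real.pi / 3 by ring, Real.sin_pi_sub,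
    Real.sin_pi_div_three]

lemma cos43 : Real.cos (4 * Real.pi / 3) = -(1/2) := by
  rw [show 4 * Real.pi / 3 = 2 * Real.pi - 2 * Real.pi / 3 by ring, Real.cos_two_pi_sub, cos23]

lemma sin43 : Real.sin (4 * Real.pi / 3) = -(Real.sqrt 3 / 2) := by
  rw [show 4 * Real.pi / 3 = 2 * Real.pi - 2 * Real.pi / 3 by ring, Real.sin_two_pi_sub, sin23]

lemma sh1 (y : ℝ) : Real.cos (y - 2 * Real.pi / 3)
    = -(Real.cos y / 2) + Real.sqrt 3 / 2 * Real.sin y := by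
  rw [Real.cos_sub, cos23, sin23]; ring

lemma sh2 (y : ℝ) : Real.cos (y - 4 * Real.pi / 3)
    = -(Real.cos y / 2) - Real.sqrt 3 / 2 * Real.sin y := by
  rw [Real.cos_sub, cos43, sin43]; ring

lemma keyF (x : ℝ) : F x = 2 * F (x-1) + F (x-2) - 3 * F (x-3) - F (x-4) + F (x-5)
    + 3 * F (x-6) - F (x-7) - 2 * F (x-8) + F (x-9) := by
  have p1 : Real.cos (Real.pi * (x-1)) = -Real.cos (Real.pi * x) := by
    rw [show Real.pi * (x-1) = Real.pi * x - Real.pi by ring, Real.cos_sub_pi]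
  have p2 : Real.cos (Real.pi * (x-2)) = Real.cos (Real.pi * x) := by
    rw [show Real.pi * (x-2) = Real.pi * x - 2 * Real.pi by ring, Real.cos_sub_two_pi]
  have p3 : Real.cos (Real.pi * (x-3)) = -Real.cos (Real.pi * x) := by
    rw [show Real.pi * (x-3) = (Real.pi * x - 2 * Real.pi) - Real.pi by ring,
      Real.cos_sub_pi, Real.cos_sub_two_pi]
  have p4 : Real.cos (Real.pi * (x-4)) = Real.cos (Real.pi * x) := by
    rw [show Real.pi * (x-4) = (Real.pi * x - 2 * Real.pi) - 2 * Real.pi by ring,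
      Real.cos_sub_two_pi, Real.cos_sub_two_pi]
  have p5 : Real.cos (Real.pi * (x-5)) = -Real.cos (Real.pi * x) := by
    rw [show Real.pi * (x-5) = ((Real.pi * x - 2 * Real.pi) - 2 * Real.pi) - Real.pi by ring,
      Real.cos_sub_pi, Real.cos_sub_two_pi, Real.cos_sub_two_pi]
  have p6 : Real.cos (Real.pi * (x-6)) = Real.cos (Real.pi * x) := by
    rw [show Real.pi * (x-6) = ((Real.pi * x - 2 * Real.pi) - 2 * Real.pi) - 2 * Real.pi by ring,
      Real.cos_sub_two_pi, Real.cos_sub_two_pi, Real.cos_sub_two_pi]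
  have p7 : Real.cos (Real.pi * (x-7)) = -Real.cos (Real.pi * x) := by
    rw [show Real.pi * (x-7)
        = (((Real.pi * x - 2 * Real.pi) - 2 * Real.pi) - 2 * Real.pi) - Real.pi by ring,
      Real.cos_sub_pi, Real.cos_sub_two_pi, Real.cos_sub_two_pi, Real.cos_sub_two_pi]
  have p8 : Real.cos (Real.pi * (x-8)) = Real.cos (Real.pi * x) := by
    rw [show Real.pi * (x-8)
        = (((Real.pi * x - 2 * Real.pi) - 2 * Real.pi) - 2 * Real.pi) - 2 * Real.pi by ring,
      Real.cos_sub_two_pi, Real.cos_sub_two_pi, Real.cos_sub_two_pi, Real.cos_sub_two_pi]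
  have p9 : Real.cos (Real.pi * (x-9)) = -Real.cos (Real.pi * x) := by
    rw [show Real.pi * (x-9)
        = ((((Real.pi * x - 2 * Real.pi) - 2 * Real.pi) - 2 * Real.pi) - 2 * Real.pi) - Real.pi
        by ring,
      Real.cos_sub_pi, Real.cos_sub_two_pi, Real.cos_sub_two_pi, Real.cos_sub_two_pi,
      Real.cos_sub_two_pi]
  set c := Real.cos (2 * Real.pi * x / 3) with hc
  set s := Real.sin (2 * Real.pi * x / 3) with hs
  have q1 : Real.cos (2 * Real.pi * (x-1) / 3) = -(c / 2) + Real.sqrt 3 / 2 * s := by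
    rw [show 2 * Real.pi * (x-1) / 3 = 2 * Real.pi * x / 3 - 2 * Real.pi / 3 by ring, sh1]
  have q2 : Real.cos (2 * Real.pi * (x-2) / 3) = -(c / 2) - Real.sqrt 3 / 2 * s := by
    rw [show 2 * Real.pi * (x-2) / 3 = 2 * Real.pi * x / 3 - 4 * Real.pi / 3 by ring, sh2]
  have q3 : Real.cos (2 * Real.pi * (x-3) / 3) = c := by
    rw [show 2 * Real.pi * (x-3) / 3 = 2 * Real.pi * x / 3 - 2 * Real.pi by ring,
      Real.cos_sub_two_pi]
  have q4 : Real.cos (2 * Real.pi * (x-4) / 3) = -(c / 2) + Real.sqrt 3 / 2 * s := by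
    rw [show 2 * Real.pi * (x-4) / 3 = (2 * Real.pi * x / 3 - 2 * Real.pi / 3) - 2 * Real.pi
      by ring, Real.cos_sub_two_pi, sh1]
  have q5 : Real.cos (2 * Real.pi * (x-5) / 3) = -(c / 2) - Real.sqrt 3 / 2 * s := by
    rw [show 2 * Real.pi * (x-5) / 3 = (2 * Real.pi * x / 3 - 4 * Real.pi / 3) - 2 * Real.pi
      by ring, Real.cos_sub_two_pi, sh2]
  have q6 : Real.cos (2 * Real.pi * (x-6) / 3) = c := by
    rw [show 2 * Real.pi * (x-6) / 3 = (2 * Real.pi * x / 3 - 2 * Real.pi) - 2 * Real.pi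
      by ring, Real.cos_sub_two_pi, Real.cos_sub_two_pi]
  have q7 : Real.cos (2 * Real.pi * (x-7) / 3) = -(c / 2) + Real.sqrt 3 / 2 * s := by
    rw [show 2 * Real.pi * (x-7) / 3
        = ((2 * Real.pi * x / 3 - 2 * Real.pi / 3) - 2 * Real.pi) - 2 * Real.pi by ring,
      Real.cos_sub_two_pi, Real.cos_sub_two_pi, sh1]
  have q8 : Real.cos (2 * Real.pi * (x-8) / 3) = -(c / 2) - Real.sqrt 3 / 2 * s := by
    rw [show 2 * Real.pi * (x-8) / 3
        = ((2 * Real.pi * x / 3 - 4 * Real.pi / 3) - 2 * Real.pi) - 2 * Real.pi by ring,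
      Real.cos_sub_two_pi, Real.cos_sub_two_pi, sh2]
  have q9 : Real.cos (2 * Real.pi * (x-9) / 3) = c := by
    rw [show 2 * Real.pi * (x-9) / 3
        = ((2 * Real.pi * x / 3 - 2 * Real.pi) - 2 * Real.pi) - 2 * Real.pi by ring,
      Real.cos_sub_two_pi, Real.cos_sub_two_pi, Real.cos_sub_two_pi]
  simp only [F, p1, p2, p3, p4, p5, p6, p7, p8, p9, q1, q2, q3, q4, q5, q6, q7, q8, q9]
  ring
lemma Fval0 : F (0:ℝ) = 1 := by
  unfold F
  rw [show Real.pi * (0:ℝ) = (0:ℝ) by ring, Real.cos_zero]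
  rw [show 2*Real.pi*(0:ℝ)/3 = (0:ℝ) by ring, Real.cos_zero]
  norm_num

lemma Fval1 : F (1:ℝ) = 2 := by
  unfold F
  rw [show Real.pi * (1:ℝ) = ((0:ℝ) + Real.pi) by ring, Real.cos_add_pi, Real.cos_zero]
  rw [show 2*Real.pi*(1:ℝ)/3 = 2*Real.pi/3 by ring, cos23]
  norm_num

lemma Fval2 : F (2:ℝ) = 5 := by
  unfold F
  rw [show Real.pi * (2:ℝ) = ((0:ℝ) + 2*Real.pi) by ring, Real.cos_add_two_pi, Real.cos_zero]
  rw [show 2*Real.pi*(2:ℝ)/3 = 4*Real.pi/3 by ring, cos43]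
  norm_num

lemma Fval3 : F (3:ℝ) = 9 := by
  unfold F
  rw [show Real.pi * (3:ℝ) = (((0:ℝ) + 2*Real.pi) + Real.pi) by ring, Real.cos_add_pi, Real.cos_add_two_pi, Real.cos_zero]
  rw [show 2*Real.pi*(3:ℝ)/3 = ((0:ℝ) + 2*Real.pi) by ring, Real.cos_add_two_pi, Real.cos_zero]
  norm_num

lemma Fval4 : F (4:ℝ) = 16 := by
  unfold F
  rw [show Real.pi * (4:ℝ) = (((0:ℝ) + 2*Real.pi) + 2*Real.pi) by ring, Real.cos_add_two_pi, Real.cos_add_two_pi, Real.cos_zero]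
  rw [show 2*Real.pi*(4:ℝ)/3 = (2*Real.pi/3 + 2*Real.pi) by ring, Real.cos_add_two_pi, cos23]
  norm_num

lemma Fval5 : F (5:ℝ) = 25 := by
  unfold F
  rw [show Real.pi * (5:ℝ) = ((((0:ℝ) + 2*Real.pi) + 2*Real.pi) + Real.pi) by ring, Real.cos_add_pi, Real.cos_add_two_pi, Real.cos_add_two_pi, Real.cos_zero]
  rw [show 2*Real.pi*(5:ℝ)/3 = (4*Real.pi/3 + 2*Real.pi) by ring, Real.cos_add_two_pi, cos43]
  norm_num

lemma Fval6 : F (6:ℝ) = 39 := by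
  unfold F
  rw [show Real.pi * (6:ℝ) = ((((0:ℝ) + 2*Real.pi) + 2*Real.pi) + 2*Real.pi) by ring, Real.cos_add_two_pi, Real.cos_add_two_pi, Real.cos_add_two_pi, Real.cos_zero]
  rw [show 2*Real.pi*(6:ℝ)/3 = (((0:ℝ) + 2*Real.pi) + 2*Real.pi) by ring, Real.cos_add_two_pi, Real.cos_add_two_pi, Real.cos_zero]
  norm_num

lemma Fval7 : F (7:ℝ) = 56 := by
  unfold F
  rw [show Real.pi * (7:ℝ) = (((((0:ℝ) + 2*Real.pi) + 2*Real.pi) + 2*Real.pi) + Real.pi) by ring, Real.cos_add_pi, Real.cos_add_two_pi, Real.cos_add_two_pi, Real.cos_add_two_pi, Real.cos_zero]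
  rw [show 2*Real.pi*(7:ℝ)/3 = ((2*Real.pi/3 + 2*Real.pi) + 2*Real.pi) by ring, Real.cos_add_two_pi, Real.cos_add_two_pi, cos23]
  norm_num

lemma Fval8 : F (8:ℝ) = 80 := by
  unfold F
  rw [show Real.pi * (8:ℝ) = (((((0:ℝ) + 2*Real.pi) + 2*Real.pi) + 2*Real.pi) + 2*Real.pi) by ring, Real.cos_add_two_pi, Real.cos_add_two_pi, Real.cos_add_two_pi, Real.cos_add_two_pi, Real.cos_zero]
  rw [show 2*Real.pi*(8:ℝ)/3 = ((4*Real.pi/3 + 2*Real.pi) + 2*Real.pi) by ring, Real.cos_add_two_pi, Real.cos_add_two_pi, cos43]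
  norm_num

lemma W_eq_F (n : ℕ) : (W (n:ℤ) [1,2,1,2,3] : ℝ) = F n := by
  induction n using Nat.strong_induction_on with
  | _ n ih =>
    by_cases h9 : n < 9
    · interval_cases n
      · rw [show ((0:ℕ):ℝ) = (0:ℝ) by norm_num, Fval0, show ((0:ℕ):ℤ) = (0:ℤ) by norm_num]
        exact_mod_cast vA0
      · rw [show ((1:ℕ):ℝ) = (1:ℝ) by norm_num, Fval1, show ((1:ℕ):ℤ) = (1:ℤ) by norm_num]
        exact_mod_cast vA1
      · rw [show ((2:ℕ):ℝ) = (2:ℝ) by norm_num, Fval2, show ((2:ℕ):ℤ) = (2:ℤ) by norm_num]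
        exact_mod_cast vA2
      · rw [show ((3:ℕ):ℝ) = (3:ℝ) by norm_num, Fval3, show ((3:ℕ):ℤ) = (3:ℤ) by norm_num]
        exact_mod_cast vA3
      · rw [show ((4:ℕ):ℝ) = (4:ℝ) by norm_num, Fval4, show ((4:ℕ):ℤ) = (4:ℤ) by norm_num]
        exact_mod_cast vA4
      · rw [show ((5:ℕ):ℝ) = (5:ℝ) by norm_num, Fval5, show ((5:ℕ):ℤ) = (5:ℤ) by norm_num]
        exact_mod_cast vA5
      · rw [show ((6:ℕ):ℝ) = (6:ℝ) by norm_num, Fval6, show ((6:ℕ):ℤ) = (6:ℤ) by norm_num]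
        exact_mod_cast vA6
      · rw [show ((7:ℕ):ℝ) = (7:ℝ) by norm_num, Fval7, show ((7:ℕ):ℤ) = (7:ℤ) by norm_num]
        exact_mod_cast vA7
      · rw [show ((8:ℕ):ℝ) = (8:ℝ) by norm_num, Fval8, show ((8:ℕ):ℤ) = (8:ℤ) by norm_num]
        exact_mod_cast vA8
    · obtain ⟨m, rfl⟩ : ∃ m, n = m + 9 := ⟨n - 9, by omega⟩
      have hA := keyA ((m:ℤ)+9) (by omega)
      rw [show (m:ℤ)+9-1 = (m:ℤ)+8 by ring, show (m:ℤ)+9-2 = (m:ℤ)+7 by ring, show (m:ℤ)+9-3 = (m:ℤ)+6 by ring, show (m:ℤ)+9-4 = (m:ℤ)+5 by ring, show (m:ℤ)+9-5 = (m:ℤ)+4 by ring, show (m:ℤ)+9-6 = (m:ℤ)+3 by ring, show (m:ℤ)+9-7 = (m:ℤ)+2 by ring, show (m:ℤ)+9-8 = (m:ℤ)+1 by ring, show (m:ℤ)+9-9 = (m:ℤ) by ring] at hA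
      have hA' := congrArg (fun z : ℤ => (z : ℝ)) hA
      push_cast at hA'
      have hF := keyF ((m:ℝ)+9)
      rw [show (m:ℝ)+9-1 = (m:ℝ)+8 by ring, show (m:ℝ)+9-2 = (m:ℝ)+7 by ring, show (m:ℝ)+9-3 = (m:ℝ)+6 by ring, show (m:ℝ)+9-4 = (m:ℝ)+5 by ring, show (m:ℝ)+9-5 = (m:ℝ)+4 by ring, show (m:ℝ)+9-6 = (m:ℝ)+3 by ring, show (m:ℝ)+9-7 = (m:ℝ)+2 by ring, show (m:ℝ)+9-8 = (m:ℝ)+1 by ring, show (m:ℝ)+9-9 = (m:ℝ) by ring] at hF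
      have i0 := ih m (by omega)
      have i1 := ih (m+1) (by omega)
      have i2 := ih (m+2) (by omega)
      have i3 := ih (m+3) (by omega)
      have i4 := ih (m+4) (by omega)
      have i5 := ih (m+5) (by omega)
      have i6 := ih (m+6) (by omega)
      have i7 := ih (m+7) (by omega)
      have i8 := ih (m+8) (by omega)
      push_cast at i0 i1 i2 i3 i4 i5 i6 i7 i8 ⊢
      linarith [hA', hF, i0, i1, i2, i3, i4, i5, i6, i7, i8]

/-- explicit quasipolynomial expression for
`W(s, (1,2) ⧺ (1,2,3)) = W(s,(1,1,2,2,3))`. -/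
theorem W_d2_d3_explicit (s : ℕ) :
    (W (s : ℤ) ([1, 2] ++ [1, 2, 3]) : ℝ) =
      ((s : ℝ) ^ 4 + 18 * (s : ℝ) ^ 3 + 112 * (s : ℝ) ^ 2 + 279 * (s : ℝ) + 220) / 288
        + 37 / 1728
        + ((2 * (s : ℝ) + 9) / 64) * Real.cos (Real.pi * s)
        + (2 / 27) * Real.cos (2 * Real.pi * s / 3) := by
  have h := W_eq_F s
  unfold F at h
  rw [show ([1, 2] ++ [1, 2, 3] : List ℕ) = [1, 2, 1, 2, 3] from rfl]
  exact h
end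

section
/- The central (maximal) coefficient of the Gaussian polynomial for m = 4 is given by: for every natural number n, P_4^n(2n) = (2n+5)³/288 + (2n+5)/32 + (3/16)·cos(πn) + (4/27)·cos(2πn/3) + (4/27)·sin(π(8n+1)/6). (Identity of real numbers, with the integer count cast to ℝ.) -/
open Finset

def Qs (N : ℕ) : Finset (ℕ × ℕ) :=
  (range (N+1) ×ˢ range (N+1)).filter fun p => p.2 ≤ p.1 ∧ p.1 ≤ 2*p.2 ∧ p.1 + p.2 ≤ N
lemma mem_Qs {N : ℕ} {p : ℕ × ℕ} :
    p ∈ Qs N ↔ p.2 ≤ p.1 ∧ p.1 ≤ 2*p.2 ∧ p.1 + p.2 ≤ N := by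
  simp only [Qs, mem_filter, mem_product, mem_range]; omega
def Es (n : ℕ) : Finset (ℕ × ℕ × ℕ) :=
  (range (n+1) ×ˢ range (n+1) ×ˢ range (n+1)).filter fun p =>
    p.2.1 ≤ p.1 ∧ p.1 ≤ 2*p.2.1 ∧ p.2.2 ≤ p.1 ∧ p.1 ≤ 2*p.2.2 ∧ p.2.1 + p.2.2 ≤ n
lemma mem_Es {n : ℕ} {p : ℕ × ℕ × ℕ} :
    p ∈ Es n ↔ p.2.1 ≤ p.1 ∧ p.1 ≤ 2*p.2.1 ∧ p.2.2 ≤ p.1 ∧ p.1 ≤ 2*p.2.2 ∧ p.2.1 + p.2.2 ≤ n := by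
  simp only [Es, mem_filter, mem_product, mem_range]; omega

lemma Estep (n : ℕ) :
    (Es (n+2)).card + ((n+2)/2 + 1) = (Es n).card + 2 * (Qs (n+2)).card := by
  set C := (Es (n+2)).filter (fun p => p.2.1 = p.1 ∨ p.2.2 = p.1) with hC
  have hinj : Function.Injective (fun p : ℕ × ℕ × ℕ => (p.1 + 2, p.2.1 + 1, p.2.2 + 1)) := by
    intro a b h; simp only [Prod.ext_iff] at h ⊢; omega
  have hsplit : (Es (n+2)).card = (Es n).card + C.card := by
    have hset : Es (n+2) = (Es n).image (fun p => (p.1 + 2, p.2.1 + 1, p.2.2 + 1)) ∪ C := by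
      ext ⟨k, m, m'⟩
      simp only [mem_union, mem_image, mem_Es, mem_filter, hC, Prod.mk.injEq]
      constructor
      · rintro ⟨h1, h2, h3, h4, h5⟩
        rcases eq_or_ne m k with he | hne
        · exact Or.inr ⟨⟨h1, h2, h3, h4, h5⟩, Or.inl he⟩
        rcases eq_or_ne m' k with he' | hne'
        · exact Or.inr ⟨⟨h1, h2, h3, h4, h5⟩, Or.inr he'⟩
        · exact Or.inl ⟨(k-2, m-1, m'-1), by refine ⟨?_, ?_, ?_, ?_, ?_⟩ <;> dsimp only <;> omega,
            by dsimp only; omega, by dsimp only; omega, by dsimp only; omega⟩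
      · rintro (⟨⟨a, b, c⟩, ⟨h1, h2, h3, h4, h5⟩, hk, hm, hm'⟩ | ⟨⟨h1, h2, h3, h4, h5⟩, _⟩) <;>
          omega
    have hdisj : Disjoint ((Es n).image (fun p => (p.1 + 2, p.2.1 + 1, p.2.2 + 1))) C := by
      rw [Finset.disjoint_left]
      rintro ⟨k, m, m'⟩ h1 h2
      simp only [mem_image, mem_Es, hC, mem_filter, Prod.mk.injEq] at h1 h2
      obtain ⟨⟨a, b, c⟩, ⟨g1, g2, g3, g4, g5⟩, hk, hm, hm'⟩ := h1
      omega
    rw [hset, card_union_of_disjoint hdisj, card_image_of_injective _ hinj]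
  have hA : (Es (n+2)).filter (fun p => p.2.1 = p.1) =
      (Qs (n+2)).image (fun p => (p.1, p.1, p.2)) := by
    ext ⟨k, m, m'⟩
    simp only [mem_filter, mem_image, mem_Es, mem_Qs, Prod.mk.injEq]
    constructor
    · rintro ⟨⟨h1, h2, h3, h4, h5⟩, h6⟩
      exact ⟨(k, m'), by omega, rfl, by omega, rfl⟩
    · rintro ⟨⟨a, b⟩, ⟨h1, h2, h3⟩, hk, hm, hm'⟩
      omega
  have hB : (Es (n+2)).filter (fun p => p.2.2 = p.1) =
      (Qs (n+2)).image (fun p => (p.1, p.2, p.1)) := by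
    ext ⟨k, m, m'⟩
    simp only [mem_filter, mem_image, mem_Es, mem_Qs, Prod.mk.injEq]
    constructor
    · rintro ⟨⟨h1, h2, h3, h4, h5⟩, h6⟩
      exact ⟨(k, m), by omega, rfl, rfl, by omega⟩
    · rintro ⟨⟨a, b⟩, ⟨h1, h2, h3⟩, hk, hm, hm'⟩
      omega
  have hAB : (Es (n+2)).filter (fun p => p.2.1 = p.1) ∩ (Es (n+2)).filter (fun p => p.2.2 = p.1)
      = (range ((n+2)/2 + 1)).image (fun k => (k, k, k)) := by
    ext ⟨k, m, m'⟩
    simp only [mem_inter, mem_filter, mem_image, mem_Es, mem_range, Prod.mk.injEq]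
    constructor
    · rintro ⟨⟨⟨h1, h2, h3, h4, h5⟩, h6⟩, _, h7⟩
      exact ⟨k, by omega, rfl, by omega, by omega⟩
    · rintro ⟨j, hj, hk, hm, hm'⟩
      omega
  have hCcard : C.card + ((n+2)/2 + 1) = 2 * (Qs (n+2)).card := by
    have injA : Function.Injective (fun p : ℕ × ℕ => (p.1, p.1, p.2)) := by
      intro a b h; simp only [Prod.ext_iff] at h ⊢; omega
    have injB : Function.Injective (fun p : ℕ × ℕ => (p.1, p.2, p.1)) := by
      intro a b h; simp only [Prod.ext_iff] at h ⊢; omega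
    have injD : Function.Injective (fun k : ℕ => (k, k, k)) := by
      intro a b h; simp only [Prod.ext_iff] at h ⊢; omega
    have h2 := Finset.card_union_add_card_inter
      ((Es (n+2)).filter (fun p => p.2.1 = p.1)) ((Es (n+2)).filter (fun p => p.2.2 = p.1))
    rw [hAB, card_image_of_injective _ injD, card_range] at h2
    have e1 : ((Es (n+2)).filter (fun p => p.2.1 = p.1)).card = (Qs (n+2)).card := by
      rw [hA, card_image_of_injective _ injA]
    have e2 : ((Es (n+2)).filter (fun p => p.2.2 = p.1)).card = (Qs (n+2)).card := by
      rw [hB, card_image_of_injective _ injB]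
    have hc : C.card = ((Es (n+2)).filter (fun p => p.2.1 = p.1) ∪
        (Es (n+2)).filter (fun p => p.2.2 = p.1)).card := by
      rw [hC, ← filter_or]
    omega
  omega

lemma Qstep (N : ℕ) : (Qs (N+3)).card = (Qs N).card + ((N+3)/2 + 1) := by
  have hinj : Function.Injective (fun p : ℕ × ℕ => (p.1 + 2, p.2 + 1)) := by
    intro a b h
    simp only [Prod.mk.injEq, Prod.ext_iff] at h ⊢
    omega
  have hinj2 : Function.Injective (fun k : ℕ => (k, k)) := by
    intro a b h; simpa [Prod.ext_iff] using h
  have hset : Qs (N+3) =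
      (Qs N).image (fun p => (p.1 + 2, p.2 + 1)) ∪
        (range ((N+3)/2 + 1)).image (fun k => (k, k)) := by
    ext ⟨k, m⟩
    simp only [mem_union, mem_image, mem_Qs, mem_range, Prod.mk.injEq]
    constructor
    · rintro ⟨h1, h2, h3⟩
      rcases eq_or_ne m k with he | hne
      · exact Or.inr ⟨k, by omega, rfl, by omega⟩
      · exact Or.inl ⟨(k-2, m-1), by omega, by omega, by omega⟩
    · rintro (⟨⟨a, b⟩, ⟨h1, h2, h3⟩, hk, hm⟩ | ⟨j, hj, hk, hm⟩) <;> omega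
  have hdisj : Disjoint ((Qs N).image (fun p => (p.1 + 2, p.2 + 1)))
      ((range ((N+3)/2 + 1)).image (fun k => (k, k))) := by
    rw [Finset.disjoint_left]
    rintro ⟨k, m⟩ h1 h2
    simp only [mem_image, mem_range, mem_Qs, Prod.mk.injEq] at h1 h2
    obtain ⟨⟨a, b⟩, ⟨g1, g2, g3⟩, hk, hm⟩ := h1
    obtain ⟨j, hj, rfl, rfl⟩ := h2
    omega
  rw [hset, card_union_of_disjoint hdisj, card_image_of_injective _ hinj,
    card_image_of_injective _ hinj2, card_range]


def qc : ℕ → ℕ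
  | 0 => 1 | 1 => 1 | 2 => 2 | 3 => 3 | 4 => 4 | _ => 5

def qQ (N : ℕ) : ℕ := 3*(N/6)*(N/6) + (3 + N%6)*(N/6) + qc (N%6)

lemma qQstep (N : ℕ) : qQ (N+3) = qQ N + ((N+3)/2 + 1) := by
  obtain ⟨q, r, hr, rfl⟩ : ∃ q r, r < 6 ∧ N = 6*q + r :=
    ⟨N/6, N%6, Nat.mod_lt _ (by norm_num), by omega⟩
  unfold qQ
  interval_cases r <;>
    [ (have d1 : (6*q+0+3)/6 = q := by omega
       have m1 : (6*q+0+3)%6 = 3 := by omega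
       have d0 : (6*q+0)/6 = q := by omega
       have m0 : (6*q+0)%6 = 0 := by omega
       have dh : (6*q+0+3)/2 = 3*q+1 := by omega
       rw [d1, m1, d0, m0, dh]);
      (have d1 : (6*q+1+3)/6 = q := by omega
       have m1 : (6*q+1+3)%6 = 4 := by omega
       have d0 : (6*q+1)/6 = q := by omega
       have m0 : (6*q+1)%6 = 1 := by omega
       have dh : (6*q+1+3)/2 = 3*q+2 := by omega
       rw [d1, m1, d0, m0, dh]);
      (have d1 : (6*q+2+3)/6 = q := by omega
       have m1 : (6*q+2+3)%6 = 5 := by omega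
       have d0 : (6*q+2)/6 = q := by omega
       have m0 : (6*q+2)%6 = 2 := by omega
       have dh : (6*q+2+3)/2 = 3*q+2 := by omega
       rw [d1, m1, d0, m0, dh]);
      (have d1 : (6*q+3+3)/6 = q+1 := by omega
       have m1 : (6*q+3+3)%6 = 0 := by omega
       have d0 : (6*q+3)/6 = q := by omega
       have m0 : (6*q+3)%6 = 3 := by omega
       have dh : (6*q+3+3)/2 = 3*q+3 := by omega
       rw [d1, m1, d0, m0, dh]);
      (have d1 : (6*q+4+3)/6 = q+1 := by omega
       have m1 : (6*q+4+3)%6 = 1 := by omega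
       have d0 : (6*q+4)/6 = q := by omega
       have m0 : (6*q+4)%6 = 4 := by omega
       have dh : (6*q+4+3)/2 = 3*q+3 := by omega
       rw [d1, m1, d0, m0, dh]);
      (have d1 : (6*q+5+3)/6 = q+1 := by omega
       have m1 : (6*q+5+3)%6 = 2 := by omega
       have d0 : (6*q+5)/6 = q := by omega
       have m0 : (6*q+5)%6 = 5 := by omega
       have dh : (6*q+5+3)/2 = 3*q+4 := by omega
       rw [d1, m1, d0, m0, dh])] <;>
    simp [qc] <;> ring


noncomputable def Tg (n : ℕ) : ℝ :=
  (3/16) * Real.cos (Real.pi * n) + (4/27) * Real.cos (2 * Real.pi * n / 3)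
    + (4/27) * Real.sin (Real.pi * (8 * (n : ℝ) + 1) / 6)

lemma cos_pi_two_thirds : Real.cos (2*Real.pi/3) = -(1/2) := by
  have h : 2*Real.pi/3 = Real.pi - Real.pi/3 := by ring
  rw [h, Real.cos_pi_sub, Real.cos_pi_div_three]

lemma cos_pi_four_thirds : Real.cos (4*Real.pi/3) = -(1/2) := by
  have h : 4*Real.pi/3 = Real.pi/3 + Real.pi := by ring
  rw [h, Real.cos_add_pi, Real.cos_pi_div_three]

lemma sin_three_pi_two : Real.sin (3*Real.pi/2) = -1 := by
  have h : 3*Real.pi/2 = Real.pi/2 + Real.pi := by ring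
  rw [h, Real.sin_add_pi, Real.sin_pi_div_two]

lemma sin_five_pi_six : Real.sin (5*Real.pi/6) = 1/2 := by
  have h : 5*Real.pi/6 = Real.pi - Real.pi/6 := by ring
  rw [h, Real.sin_pi_sub, Real.sin_pi_div_six]

lemma Tg0 (q : ℕ) : Tg (6*q) = 3/16 + 4/27 + 2/27 := by
  unfold Tg
  have h1 : Real.pi * ((6*q : ℕ) : ℝ) = 0 + (3*q : ℤ) * (2*Real.pi) := by push_cast; ring
  have h2 : 2 * Real.pi * ((6*q : ℕ) : ℝ) / 3 = 0 + (2*q : ℤ) * (2*Real.pi) := by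
    push_cast; ring
  have h3 : Real.pi * (8 * ((6*q : ℕ) : ℝ) + 1) / 6 = Real.pi/6 + (4*q : ℤ) * (2*Real.pi) := by
    push_cast; ring
  rw [h1, h2, h3, Real.cos_add_int_mul_two_pi, Real.cos_add_int_mul_two_pi,
    Real.sin_add_int_mul_two_pi, Real.cos_zero, Real.sin_pi_div_six]
  ring

lemma Tg1 (q : ℕ) : Tg (6*q+1) = -(3/16) - 2/27 - 4/27 := by
  unfold Tg
  have h1 : Real.pi * ((6*q+1 : ℕ) : ℝ) = Real.pi + (3*q : ℤ) * (2*Real.pi) := by push_cast; ring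
  have h2 : 2 * Real.pi * ((6*q+1 : ℕ) : ℝ) / 3 = 2*Real.pi/3 + (2*q : ℤ) * (2*Real.pi) := by
    push_cast; ring
  have h3 : Real.pi * (8 * ((6*q+1 : ℕ) : ℝ) + 1) / 6
      = 3*Real.pi/2 + (4*q : ℤ) * (2*Real.pi) := by push_cast; ring
  rw [h1, h2, h3, Real.cos_add_int_mul_two_pi, Real.cos_add_int_mul_two_pi,
    Real.sin_add_int_mul_two_pi, Real.cos_pi, cos_pi_two_thirds, sin_three_pi_two]
  ring

lemma Tg2 (q : ℕ) : Tg (6*q+2) = 3/16 - 2/27 + 2/27 := by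
  unfold Tg
  have h1 : Real.pi * ((6*q+2 : ℕ) : ℝ) = 0 + (3*q+1 : ℤ) * (2*Real.pi) := by push_cast; ring
  have h2 : 2 * Real.pi * ((6*q+2 : ℕ) : ℝ) / 3 = 4*Real.pi/3 + (2*q : ℤ) * (2*Real.pi) := by
    push_cast; ring
  have h3 : Real.pi * (8 * ((6*q+2 : ℕ) : ℝ) + 1) / 6
      = 5*Real.pi/6 + (4*q+1 : ℤ) * (2*Real.pi) := by push_cast; ring
  rw [h1, h2, h3, Real.cos_add_int_mul_two_pi, Real.cos_add_int_mul_two_pi,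
    Real.sin_add_int_mul_two_pi, Real.cos_zero, cos_pi_four_thirds, sin_five_pi_six]
  ring

lemma Tg3 (q : ℕ) : Tg (6*q+3) = -(3/16) + 4/27 + 2/27 := by
  unfold Tg
  have h1 : Real.pi * ((6*q+3 : ℕ) : ℝ) = Real.pi + (3*q+1 : ℤ) * (2*Real.pi) := by
    push_cast; ring
  have h2 : 2 * Real.pi * ((6*q+3 : ℕ) : ℝ) / 3 = 0 + (2*q+1 : ℤ) * (2*Real.pi) := by
    push_cast; ring
  have h3 : Real.pi * (8 * ((6*q+3 : ℕ) : ℝ) + 1) / 6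
      = Real.pi/6 + (4*q+2 : ℤ) * (2*Real.pi) := by push_cast; ring
  rw [h1, h2, h3, Real.cos_add_int_mul_two_pi, Real.cos_add_int_mul_two_pi,
    Real.sin_add_int_mul_two_pi, Real.cos_pi, Real.cos_zero, Real.sin_pi_div_six]
  ring

lemma Tg4 (q : ℕ) : Tg (6*q+4) = 3/16 - 2/27 - 4/27 := by
  unfold Tg
  have h1 : Real.pi * ((6*q+4 : ℕ) : ℝ) = 0 + (3*q+2 : ℤ) * (2*Real.pi) := by push_cast; ring
  have h2 : 2 * Real.pi * ((6*q+4 : ℕ) : ℝ) / 3 = 2*Real.pi/3 + (2*q+1 : ℤ) * (2*Real.pi) := by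
    push_cast; ring
  have h3 : Real.pi * (8 * ((6*q+4 : ℕ) : ℝ) + 1) / 6
      = 3*Real.pi/2 + (4*q+2 : ℤ) * (2*Real.pi) := by push_cast; ring
  rw [h1, h2, h3, Real.cos_add_int_mul_two_pi, Real.cos_add_int_mul_two_pi,
    Real.sin_add_int_mul_two_pi, Real.cos_zero, cos_pi_two_thirds, sin_three_pi_two]
  ring

lemma Tg5 (q : ℕ) : Tg (6*q+5) = -(3/16) - 2/27 + 2/27 := by
  unfold Tg
  have h1 : Real.pi * ((6*q+5 : ℕ) : ℝ) = Real.pi + (3*q+2 : ℤ) * (2*Real.pi) := by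
    push_cast; ring
  have h2 : 2 * Real.pi * ((6*q+5 : ℕ) : ℝ) / 3 = 4*Real.pi/3 + (2*q+1 : ℤ) * (2*Real.pi) := by
    push_cast; ring
  have h3 : Real.pi * (8 * ((6*q+5 : ℕ) : ℝ) + 1) / 6
      = 5*Real.pi/6 + (4*q+3 : ℤ) * (2*Real.pi) := by push_cast; ring
  rw [h1, h2, h3, Real.cos_add_int_mul_two_pi, Real.cos_add_int_mul_two_pi,
    Real.sin_add_int_mul_two_pi, Real.cos_pi, cos_pi_four_thirds, sin_five_pi_six]
  ring

noncomputable def Rf (n : ℕ) : ℝ :=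
  (2*(n:ℝ)+5)^3/288 + (2*(n:ℝ)+5)/32 + Tg n


lemma Rstep (n : ℕ) : Rf (n+2) + (((n+2)/2 : ℕ) : ℝ) + 1 = Rf n + 2 * (qQ (n+2) : ℝ) := by
  obtain ⟨q, r, hr, rfl⟩ : ∃ q r, r < 6 ∧ n = 6*q + r :=
    ⟨n/6, n%6, Nat.mod_lt _ (by norm_num), by omega⟩
  interval_cases r
  · rw [show 6*q+0+2 = 6*q+2 from by omega, show 6*q+0 = 6*q from by omega]
    have hq : qQ (6*q+2) = 3*q*q + 5*q + 2 := by
      unfold qQ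
      rw [show (6*q+2)/6 = q from by omega, show (6*q+2)%6 = 2 from by omega]
      norm_num [qc]
    rw [show (6*q+2)/2 = 3*q+1 from by omega, hq]
    unfold Rf
    rw [Tg0 q, Tg2 q]
    push_cast; ring
  · rw [show 6*q+1+2 = 6*q+3 from by omega]
    have hq : qQ (6*q+3) = 3*q*q + 6*q + 3 := by
      unfold qQ
      rw [show (6*q+3)/6 = q from by omega, show (6*q+3)%6 = 3 from by omega]
      norm_num [qc]
    rw [show (6*q+3)/2 = 3*q+1 from by omega, hq]
    unfold Rf
    rw [Tg1 q, Tg3 q]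
    push_cast; ring
  · rw [show 6*q+2+2 = 6*q+4 from by omega]
    have hq : qQ (6*q+4) = 3*q*q + 7*q + 4 := by
      unfold qQ
      rw [show (6*q+4)/6 = q from by omega, show (6*q+4)%6 = 4 from by omega]
      norm_num [qc]
    rw [show (6*q+4)/2 = 3*q+2 from by omega, hq]
    unfold Rf
    rw [Tg2 q, Tg4 q]
    push_cast; ring
  · rw [show 6*q+3+2 = 6*q+5 from by omega]
    have hq : qQ (6*q+5) = 3*q*q + 8*q + 5 := by
      unfold qQ
      rw [show (6*q+5)/6 = q from by omega, show (6*q+5)%6 = 5 from by omega]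
      norm_num [qc]
    rw [show (6*q+5)/2 = 3*q+2 from by omega, hq]
    unfold Rf
    rw [Tg3 q, Tg5 q]
    push_cast; ring
  · rw [show 6*q+4+2 = 6*(q+1) from by omega]
    have hq : qQ (6*(q+1)) = 3*(q+1)*(q+1) + 3*(q+1) + 1 := by
      unfold qQ
      rw [show (6*(q+1))/6 = q+1 from by omega, show (6*(q+1))%6 = 0 from by omega]
      norm_num [qc]
    rw [show (6*(q+1))/2 = 3*q+3 from by omega, hq]
    unfold Rf
    rw [Tg4 q, Tg0 (q+1)]
    push_cast; ring
  · rw [show 6*q+5+2 = 6*(q+1)+1 from by omega]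
    have hq : qQ (6*(q+1)+1) = 3*(q+1)*(q+1) + 4*(q+1) + 1 := by
      unfold qQ
      rw [show (6*(q+1)+1)/6 = q+1 from by omega, show (6*(q+1)+1)%6 = 1 from by omega]
      norm_num [qc]
    rw [show (6*(q+1)+1)/2 = 3*q+3 from by omega, hq]
    unfold Rf
    rw [Tg5 q, Tg1 (q+1)]
    push_cast; ring

lemma P_eq (n : ℕ) : P 4 n (2*n) = (Es n).card := by
  rw [P, ← Nat.card_eq_finsetCard]
  apply Nat.card_congr
  refine ⟨fun x => ⟨(x.1 2 + 2 * x.1 3, n - x.1 1 - x.1 2 - x.1 3, x.1 2 + x.1 3), ?_⟩,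
    fun p => ⟨![2*p.1.2.1 - p.1.1, n - p.1.2.1 - p.1.2.2, 2*p.1.2.2 - p.1.1, p.1.1 - p.1.2.2],
      ?_⟩, ?_, ?_⟩
  · obtain ⟨x, h1, h2⟩ := x
    simp only [Fin.sum_univ_four] at h1 h2
    rw [mem_Es]
    simp only []
    norm_num at h1 ⊢
    omega
  · obtain ⟨⟨k, m, m'⟩, hp⟩ := p
    rw [mem_Es] at hp
    simp only [] at hp
    constructor
    · simp [Fin.sum_univ_four]
      omega
    · simp [Fin.sum_univ_four]
      omega
  · rintro ⟨x, h1, h2⟩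
    apply Subtype.ext
    simp only [Fin.sum_univ_four] at h1 h2
    norm_num at h1
    funext i
    fin_cases i <;> simp <;> omega
  · rintro ⟨⟨k, m, m'⟩, hp⟩
    rw [mem_Es] at hp
    simp only [] at hp
    apply Subtype.ext
    simp only [Prod.ext_iff]
    norm_num
    have e2 : (![2 * m - k, n - m - m', 2 * m' - k, k - m'] : Fin 4 → ℕ) 2 = 2 * m' - k := rfl
    have e3 : (![2 * m - k, n - m - m', 2 * m' - k, k - m'] : Fin 4 → ℕ) 3 = k - m' := rfl
    simp only [e2, e3]
    omega

lemma Qcard_eq (N : ℕ) : (Qs N).card = qQ N := by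
  induction N using Nat.strong_induction_on with
  | _ N ih =>
    rcases lt_or_ge N 3 with h | h
    · interval_cases N <;> decide
    · obtain ⟨M, rfl⟩ : ∃ M, N = M + 3 := ⟨N - 3, by omega⟩
      rw [Qstep, qQstep, ih M (by omega)]

lemma Ecard_real (n : ℕ) : ((Es n).card : ℝ) = Rf n := by
  induction n using Nat.strong_induction_on with
  | _ n ih =>
    rcases lt_or_ge n 2 with h | h
    · have h0 : Rf 0 = 1 := by
        have ht := Tg0 0
        norm_num at ht
        unfold Rf
        rw [ht]
        norm_num
      have h1 : Rf 1 = 1 := by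
        have ht := Tg1 0
        norm_num at ht
        unfold Rf
        rw [ht]
        norm_num
      interval_cases n
      · rw [show (Es 0).card = 1 from by decide, h0]; norm_num
      · rw [show (Es 1).card = 1 from by decide, h1]; norm_num
    · obtain ⟨m, rfl⟩ : ∃ m, n = m + 2 := ⟨n - 2, by omega⟩
      have h1 := Estep m
      have h2 := Qcard_eq (m+2)
      have hR := Rstep m
      have hm := ih m (by omega)
      rw [h2] at h1
      have hcast : ((Es (m+2)).card : ℝ) + (((m+2)/2 : ℕ) : ℝ) + 1
          = ((Es m).card : ℝ) + 2 * (qQ (m+2) : ℝ) := by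
        exact_mod_cast h1
      rw [hm] at hcast
      linarith

/-- the maximal (central) coefficient of the Gaussian polynomial for `m = 4`. -/
theorem P4_max_coefficient (n : ℕ) :
    (P 4 n (2 * n) : ℝ) =
      (2 * (n : ℝ) + 5) ^ 3 / 288 + (2 * (n : ℝ) + 5) / 32
        + (3 / 16) * Real.cos (Real.pi * n)
        + (4 / 27) * Real.cos (2 * Real.pi * n / 3)
        + (4 / 27) * Real.sin (Real.pi * (8 * (n : ℝ) + 1) / 6) := by
  rw [P_eq n, Ecard_real n]
  unfold Rf Tg
  ring
end

section
/- Let m = 2k be even with k ≥ 1. Then the central Gaussian polynomial coefficient grows like n^{m−1} with leading coefficient given by an Eulerian number of type A: the sequence P_m^n(k·n)/n^{m−1} tends, as n → ∞, to A_{m−1, k}/((m−1)!·m!), where A_{m−1,k} = Σ_{j=0}^{k} (−1)^j · binom(m, j) · (k−j)^{m−1}. -/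
open Finset

open Filter PowerSeries


noncomputable def w (m t : ℕ) : ℕ :=
  Nat.card {x : Fin m → ℕ // ∑ i : Fin m, ((i : ℕ) + 1) * x i = t}


lemma sol_bound {m t : ℕ} {x : Fin m → ℕ} (hx : ∑ i : Fin m, ((i : ℕ) + 1) * x i = t)
    (i : Fin m) : x i ≤ t := by
  calc x i ≤ ((i : ℕ) + 1) * x i := by nlinarith []
  _ ≤ ∑ i : Fin m, ((i : ℕ) + 1) * x i :=
      Finset.single_le_sum (f := fun j : Fin m => ((j : ℕ) + 1) * x j) (fun j _ => Nat.zero_le _) (mem_univ i)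
  _ = t := hx


instance sol_finite (m t : ℕ) :
    Finite {x : Fin m → ℕ // ∑ i : Fin m, ((i : ℕ) + 1) * x i = t} := by
  apply Finite.of_injective (fun x => (fun i => (⟨x.1 i, Nat.lt_succ_of_le (sol_bound x.2 i)⟩ :
    Fin (t + 1))))
  intro x y hxy
  ext i
  exact congrArg Fin.val (congrFun hxy i)


def Tset (m t : ℕ) : Type :=
  {p : ℕ × (Fin m → ℕ) // (m + 1) * p.1 + ∑ i : Fin m, ((i : ℕ) + 1) * p.2 i = t}


instance tset_finite (m t : ℕ) : Finite (Tset m t) := by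
  have hb : ∀ p : Tset m t, p.1.1 ≤ t ∧ ∀ i, p.1.2 i ≤ t := by
    rintro ⟨⟨r, y⟩, hp⟩
    dsimp only at hp ⊢
    have hr : r ≤ (m + 1) * r := Nat.le_mul_of_pos_left r (by omega)
    constructor
    · omega
    · intro i
      have h1 : ((i : ℕ) + 1) * y i ≤ ∑ i : Fin m, ((i : ℕ) + 1) * y i :=
        Finset.single_le_sum (f := fun j : Fin m => ((j : ℕ) + 1) * y j)
          (fun j _ => Nat.zero_le _) (mem_univ i)
      have h2 : y i ≤ ((i : ℕ) + 1) * y i := Nat.le_mul_of_pos_left _ (by omega)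
      omega
  apply Finite.of_injective (fun p : Tset m t =>
    ((⟨p.1.1, Nat.lt_succ_of_le (hb p).1⟩ : Fin (t + 1)),
     (fun i => (⟨p.1.2 i, Nat.lt_succ_of_le ((hb p).2 i)⟩ : Fin (t + 1)))))
  rintro ⟨⟨r, y⟩, hp⟩ ⟨⟨r', y'⟩, hp'⟩ h
  simp only [Prod.mk.injEq, Fin.mk.injEq] at h
  apply Subtype.ext
  simp only [Prod.mk.injEq]
  refine ⟨h.1, funext fun i => ?_⟩
  exact congrArg Fin.val (congrFun h.2 i)


lemma tset_card (m t : ℕ) :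
    Nat.card (Tset m t) = w m t + (if m + 1 ≤ t then Nat.card (Tset m (t - (m + 1))) else 0) := by
  classical
  have e0 : {p : Tset m t // p.1.1 = 0} ≃
      {x : Fin m → ℕ // ∑ i : Fin m, ((i : ℕ) + 1) * x i = t} :=
    { toFun := fun p => ⟨p.1.1.2, by
        obtain ⟨⟨⟨r, x⟩, hp⟩, h0⟩ := p
        dsimp only at hp h0 ⊢
        subst h0; simpa using hp⟩
      invFun := fun y => ⟨⟨(0, y.1), by have := y.2; simpa using this⟩, rfl⟩
      left_inv := by rintro ⟨⟨⟨r, x⟩, hp⟩, h0⟩; dsimp only at h0; subst h0; rfl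
      right_inv := by rintro ⟨y, hy⟩; rfl }
  rw [← Nat.card_congr (Equiv.sumCompl (fun p : Tset m t => p.1.1 = 0)), Nat.card_sum,
    Nat.card_congr e0]
  congr 1
  by_cases h : m + 1 ≤ t
  · rw [if_pos h]
    have e1 : {p : Tset m t // ¬p.1.1 = 0} ≃ Tset m (t - (m + 1)) :=
      { toFun := fun p => ⟨(p.1.1.1 - 1, p.1.1.2), by
          obtain ⟨⟨⟨r, x⟩, hp⟩, h0⟩ := p
          dsimp only at hp h0 ⊢
          have hr : (m + 1) * r = (m + 1) * (r - 1) + (m + 1) := by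
            have : r = (r - 1) + 1 := by omega
            nlinarith [this]
          omega⟩
        invFun := fun q => ⟨⟨(q.1.1 + 1, q.1.2), by
          obtain ⟨⟨r, x⟩, hq⟩ := q
          dsimp only at hq ⊢
          have h2 : (m + 1) * (r + 1) = (m + 1) * r + (m + 1) := by ring
          omega⟩, by simp⟩
        left_inv := by
          rintro ⟨⟨⟨r, x⟩, hp⟩, h0⟩
          apply Subtype.ext; apply Subtype.ext
          dsimp only at h0 ⊢
          have : r - 1 + 1 = r := by omega
          simp [this]
        right_inv := by rintro ⟨⟨r, x⟩, hp⟩; rfl }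
    exact Nat.card_congr e1
  · rw [if_neg h]
    have : IsEmpty {p : Tset m t // ¬p.1.1 = 0} := by
      constructor
      rintro ⟨⟨⟨r, x⟩, hp⟩, h0⟩
      dsimp only at hp h0
      have : m + 1 ≤ (m + 1) * r := Nat.le_mul_of_pos_right _ (by omega)
      omega
    simp [Nat.card_of_isEmpty]


noncomputable def solEquivT (m t : ℕ) :
    {x : Fin (m + 1) → ℕ // ∑ i : Fin (m + 1), ((i : ℕ) + 1) * x i = t} ≃ Tset m t := by
  refine (Fin.insertNthEquiv (fun _ => ℕ) (Fin.last m)).symm.subtypeEquiv ?_ |>.trans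
    (Equiv.refl _)
  intro x
  rw [Fin.sum_univ_castSucc]
  simp [Fin.succAbove_last, Fin.val_last, Fin.init, mul_comm, Fin.insertNthEquiv]
  constructor
  · intro h; omega
  · intro h; omega


lemma w_succ_eq (m t : ℕ) : w (m + 1) t = Nat.card (Tset m t) :=
  Nat.card_congr (solEquivT m t)


lemma w_rec (m t : ℕ) :
    w (m + 1) t = w m t + (if m + 1 ≤ t then w (m + 1) (t - (m + 1)) else 0) := by
  rw [w_succ_eq, tset_card, ← w_succ_eq]


lemma w_zero (t : ℕ) : w 0 t = if t = 0 then 1 else 0 := by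
  unfold w
  rcases Nat.eq_zero_or_pos t with h | h
  · subst h
    rw [if_pos rfl]
    rw [Nat.card_eq_one_iff_unique]
    constructor
    · constructor
      rintro ⟨x, hx⟩ ⟨y, hy⟩
      apply Subtype.ext; funext i; exact absurd i.2 (by omega)
    · exact ⟨⟨(fun i => 0), by simp⟩⟩
  · rw [if_neg (by omega)]
    haveI : IsEmpty {x : Fin 0 → ℕ // ∑ i : Fin 0, ((i : ℕ) + 1) * x i = t} := by
      constructor; rintro ⟨x, hx⟩; simp at hx; omega
    exact Nat.card_of_isEmpty


lemma w_one (t : ℕ) : w 1 t = 1 := by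
  induction t using Nat.strong_induction_on with
  | _ t ih =>
    rw [w_rec, w_zero]
    rcases Nat.eq_zero_or_pos t with h | h
    · simp [h]
    · rw [if_neg (by omega), if_pos (by omega), ih (t - 1) (by omega)]


lemma w_sum (m t : ℕ) :
    w (m + 1) t = ∑ r ∈ Finset.range (t / (m + 1) + 1), w m (t - (m + 1) * r) := by
  induction t using Nat.strong_induction_on with
  | _ t ih =>
    rw [w_rec]
    by_cases h : m + 1 ≤ t
    · rw [if_pos h, ih (t - (m + 1)) (by omega)]
      have hd : t / (m + 1) = (t - (m + 1)) / (m + 1) + 1 := by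
        rcases Nat.exists_eq_add_of_le h with ⟨u, hu⟩
        subst hu
        rw [Nat.add_sub_cancel_left, Nat.add_comm, Nat.add_div_right _ (by omega)]
      rw [hd, Finset.sum_range_succ' (fun r => w m (t - (m + 1) * r))]
      have harg : ∀ r, t - (m + 1) * (r + 1) = t - (m + 1) - (m + 1) * r := by
        intro r; rw [Nat.mul_succ]; omega
      simp only [Nat.mul_zero, Nat.sub_zero, harg]
      ring
    · rw [if_neg h]
      have : t / (m + 1) = 0 := Nat.div_eq_of_lt (by omega)
      simp [this]


lemma sol_bound' {m t : ℕ} {x : Fin m → ℕ} (hx : ∑ i : Fin m, ((i : ℕ) + 1) * x i = t)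
    (i : Fin m) : x i ≤ t := by
  have h1 : ((i : ℕ) + 1) * x i ≤ ∑ i : Fin m, ((i : ℕ) + 1) * x i :=
    Finset.single_le_sum (f := fun j : Fin m => ((j : ℕ) + 1) * x j)
      (fun j _ => Nat.zero_le _) (mem_univ i)
  have h2 : x i ≤ ((i : ℕ) + 1) * x i := Nat.le_mul_of_pos_left _ (by omega)
  omega


instance solP_finite (m n s : ℕ) :
    Finite {x : Fin m → ℕ // (∑ i : Fin m, ((i : ℕ) + 1) * x i = s) ∧ ∑ i, x i ≤ n} := by
  apply Finite.of_injective
    (fun x => (fun i => (⟨x.1 i, Nat.lt_succ_of_le (sol_bound' x.2.1 i)⟩ : Fin (s + 1))))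
  intro x y hxy
  ext i
  exact congrArg Fin.val (congrFun hxy i)


lemma P_n_zero (m s : ℕ) : P m 0 s = if s = 0 then 1 else 0 := by
  unfold P
  rcases Nat.eq_zero_or_pos s with h | h
  · subst h
    rw [if_pos rfl, Nat.card_eq_one_iff_unique]
    constructor
    · constructor
      rintro ⟨x, hx1, hx2⟩ ⟨y, hy1, hy2⟩
      apply Subtype.ext; funext i
      have hx0 : x i = 0 := by
        have := Finset.single_le_sum (f := x) (fun j _ => Nat.zero_le _) (mem_univ i)
        omega
      have hy0 : y i = 0 := by
        have := Finset.single_le_sum (f := y) (fun j _ => Nat.zero_le _) (mem_univ i)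
        omega
      show x i = y i
      rw [hx0, hy0]
    · exact ⟨⟨(fun _ => 0), by simp⟩⟩
  · rw [if_neg (by omega)]
    haveI : IsEmpty {x : Fin m → ℕ // (∑ i : Fin m, ((i : ℕ) + 1) * x i = s) ∧ ∑ i, x i ≤ 0} := by
      constructor
      rintro ⟨x, hx1, hx2⟩
      have hz : ∀ i, x i = 0 := by
        intro i
        have := Finset.single_le_sum (f := x) (fun j _ => Nat.zero_le _) (mem_univ i)
        omega
      rw [Finset.sum_congr rfl (fun i _ => by rw [hz i, Nat.mul_zero])] at hx1
      simp at hx1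
      omega
    exact Nat.card_of_isEmpty


lemma P_m_zero (n s : ℕ) : P 0 n s = if s = 0 then 1 else 0 := by
  unfold P
  rcases Nat.eq_zero_or_pos s with h | h
  · subst h
    rw [if_pos rfl, Nat.card_eq_one_iff_unique]
    constructor
    · constructor
      rintro ⟨x, hx⟩ ⟨y, hy⟩
      apply Subtype.ext; funext i; exact absurd i.2 (by omega)
    · exact ⟨⟨(fun _ => 0), by simp⟩⟩
  · rw [if_neg (by omega)]
    haveI : IsEmpty {x : Fin 0 → ℕ // (∑ i : Fin 0, ((i : ℕ) + 1) * x i = s) ∧ ∑ i, x i ≤ n} := by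
      constructor; rintro ⟨x, hx, _⟩; simp at hx; omega
    exact Nat.card_of_isEmpty


lemma sum_shift (m : ℕ) (x : Fin (m + 1) → ℕ) :
    (∑ i : Fin (m + 1), ((i : ℕ) + 1) * x i
      = x 0 + (∑ i : Fin m, ((i : ℕ) + 1) * x i.succ) + (∑ i : Fin m, x i.succ)) ∧
    (∑ i : Fin (m + 1), x i = x 0 + ∑ i : Fin m, x i.succ) := by
  constructor
  · rw [Fin.sum_univ_succ]
    simp only [Fin.val_zero, Fin.val_succ]
    have : ∀ i : Fin m, ((i : ℕ) + 1 + 1) * x i.succ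
        = ((i : ℕ) + 1) * x i.succ + x i.succ := by intro i; ring
    rw [Finset.sum_congr rfl (fun i _ => this i), Finset.sum_add_distrib]
    ring
  · rw [Fin.sum_univ_succ]


lemma P_rec (m n s : ℕ) :
    P (m + 1) (n + 1) s
      = P (m + 1) n s + (if n + 1 ≤ s then P m (n + 1) (s - (n + 1)) else 0) := by
  classical
  set A := {x : Fin (m + 1) → ℕ //
    (∑ i : Fin (m + 1), ((i : ℕ) + 1) * x i = s) ∧ ∑ i, x i ≤ n + 1} with hA
  have e0 : {p : A // ∑ i, p.1 i ≤ n} ≃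
      {x : Fin (m + 1) → ℕ // (∑ i : Fin (m + 1), ((i : ℕ) + 1) * x i = s) ∧ ∑ i, x i ≤ n} :=
    { toFun := fun p => ⟨p.1.1, p.1.2.1, p.2⟩
      invFun := fun x => ⟨⟨x.1, x.2.1, le_trans x.2.2 (by omega)⟩, x.2.2⟩
      left_inv := by rintro ⟨⟨x, hx⟩, h0⟩; rfl
      right_inv := by rintro ⟨x, hx⟩; rfl }
  have hcard : P (m + 1) (n + 1) s
      = P (m + 1) n s + Nat.card {p : A // ¬ ∑ i, p.1 i ≤ n} := by
    show Nat.card A = _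
    rw [← Nat.card_congr (Equiv.sumCompl (fun p : A => ∑ i, p.1 i ≤ n)), Nat.card_sum,
      Nat.card_congr e0]
    rfl
  rw [hcard]
  congr 1
  by_cases h : n + 1 ≤ s
  · rw [if_pos h]
    have e1 : {p : A // ¬ ∑ i, p.1 i ≤ n} ≃
        {y : Fin m → ℕ // (∑ i : Fin m, ((i : ℕ) + 1) * y i = s - (n + 1)) ∧ ∑ i, y i ≤ n + 1} :=
      { toFun := fun p => ⟨fun i => p.1.1 i.succ, by
          obtain ⟨⟨x, hx1, hx2⟩, h0⟩ := p
          simp only [not_le] at h0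
          obtain ⟨hs1, hs2⟩ := sum_shift m x
          dsimp only at hx1 hx2 h0 ⊢
          omega⟩
        invFun := fun y => ⟨⟨Fin.cons (n + 1 - ∑ i, y.1 i) y.1, by
          obtain ⟨y, hy1, hy2⟩ := y
          obtain ⟨hs1, hs2⟩ := sum_shift m (Fin.cons (n + 1 - ∑ i, y i) y)
          simp only [Fin.cons_zero, Fin.cons_succ] at hs1 hs2
          dsimp only
          constructor
          · omega
          · omega⟩, by
          obtain ⟨y, hy1, hy2⟩ := y
          obtain ⟨hs1, hs2⟩ := sum_shift m (Fin.cons (n + 1 - ∑ i, y i) y)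
          simp only [Fin.cons_zero, Fin.cons_succ] at hs2
          dsimp only
          rw [hs2]
          omega⟩
        left_inv := by
          rintro ⟨⟨x, hx1, hx2⟩, h0⟩
          simp only [not_le] at h0
          obtain ⟨hs1, hs2⟩ := sum_shift m x
          apply Subtype.ext; apply Subtype.ext
          dsimp only
          have hx0 : n + 1 - ∑ i : Fin m, x i.succ = x 0 := by omega
          rw [hx0]
          exact Fin.cons_self_tail x
        right_inv := by
          rintro ⟨y, hy1, hy2⟩
          apply Subtype.ext
          funext i
          simp [Fin.cons_succ] }
    exact Nat.card_congr e1
  · rw [if_neg h]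
    haveI : IsEmpty {p : A // ¬ ∑ i, p.1 i ≤ n} := by
      constructor
      rintro ⟨⟨x, hx1, hx2⟩, h0⟩
      simp only [not_le] at h0
      obtain ⟨hs1, hs2⟩ := sum_shift m x
      omega
    exact Nat.card_of_isEmpty


noncomputable def gS (m : ℕ) : PowerSeries ℤ := PowerSeries.mk fun t => (w m t : ℤ)


noncomputable def pS (m n : ℕ) : PowerSeries ℤ := PowerSeries.mk fun s => (P m n s : ℤ)


noncomputable def Aprod (m : ℕ) : PowerSeries ℤ := ∏ i ∈ range m, (1 - X ^ (i + 1))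


noncomputable def Bprod (m n : ℕ) : PowerSeries ℤ := ∏ i ∈ range m, (1 - X ^ (n + 1 + i))


lemma coeff_one_sub_pow_mul (a : ℕ) (f : PowerSeries ℤ) (t : ℕ) :
    coeff t ((1 - X ^ a) * f)
      = coeff t f - if a ≤ t then coeff (t - a) f else 0 := by
  rw [sub_mul, one_mul, map_sub, mul_comm, coeff_mul_X_pow']


lemma gS_step (m : ℕ) : (1 - X ^ (m + 1)) * gS (m + 1) = gS m := by
  ext t
  rw [coeff_one_sub_pow_mul]
  simp only [gS, coeff_mk]
  rw [w_rec m t]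
  split_ifs <;> push_cast <;> ring


lemma A_mul_g (m : ℕ) : Aprod m * gS m = 1 := by
  induction m with
  | zero =>
    have : gS 0 = 1 := by
      ext t
      simp only [gS, coeff_mk, w_zero, coeff_one]
      split_ifs <;> simp_all
    simp [Aprod, this]
  | succ m ih =>
    have : Aprod (m + 1) = Aprod m * (1 - X ^ (m + 1)) := by
      rw [Aprod, prod_range_succ]; rfl
    rw [this, mul_assoc, gS_step, ih]


lemma pS_n_zero (m : ℕ) : pS m 0 = 1 := by
  ext s
  simp only [pS, coeff_mk, P_n_zero, coeff_one]
  split_ifs <;> simp_all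


lemma pS_rec (m n : ℕ) : pS (m + 1) (n + 1) = pS (m + 1) n + X ^ (n + 1) * pS m (n + 1) := by
  ext s
  rw [map_add, mul_comm, coeff_mul_X_pow']
  simp only [pS, coeff_mk]
  rw [P_rec m n s]
  split_ifs <;> push_cast <;> ring


lemma A_mul_p (m : ℕ) : ∀ n, Aprod m * pS m n = Bprod m n := by
  induction m with
  | zero =>
    intro n
    have h1 : pS 0 n = 1 := by
      ext s
      simp only [pS, coeff_mk, P_m_zero, coeff_one]
      split_ifs <;> simp_all
    simp [Aprod, Bprod, h1]
  | succ m ih =>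
    intro n
    induction n with
    | zero =>
      rw [pS_n_zero, mul_one, Bprod, Aprod]
      exact prod_congr rfl fun i _ => by rw [Nat.zero_add, Nat.add_comm 1 i]
    | succ n ihn =>
      have hA : Aprod (m + 1) = Aprod m * (1 - X ^ (m + 1)) := by
        rw [Aprod, prod_range_succ]; rfl
      have hB1 : Bprod (m + 1) n = (1 - X ^ (n + 1)) * Bprod m (n + 1) := by
        rw [Bprod, prod_range_succ', mul_comm]
        congr 1
        exact prod_congr rfl fun i _ => by rw [show n + 1 + (i + 1) = n + 1 + 1 + i by omega]
      have hB2 : Bprod (m + 1) (n + 1) = Bprod m (n + 1) * (1 - X ^ (n + 1 + 1 + m)) := by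
        rw [Bprod, prod_range_succ]; rfl
      rw [pS_rec, mul_add, ihn, hB1, hB2]
      have hXX : (X : PowerSeries ℤ) ^ (n + 1) * X ^ (m + 1) = X ^ (n + 1 + 1 + m) := by
        rw [← pow_add]; congr 1; omega
      calc (1 - X ^ (n + 1)) * Bprod m (n + 1) + Aprod (m + 1) * (X ^ (n + 1) * pS m (n + 1))
          = (1 - X ^ (n + 1)) * Bprod m (n + 1)
            + X ^ (n + 1) * ((1 - X ^ (m + 1)) * (Aprod m * pS m (n + 1))) := by
            rw [hA]; ring
        _ = (1 - X ^ (n + 1)) * Bprod m (n + 1)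
            + X ^ (n + 1) * ((1 - X ^ (m + 1)) * Bprod m (n + 1)) := by rw [ih]
        _ = Bprod m (n + 1) * (1 - X ^ (n + 1 + 1 + m)) := by
            rw [mul_sub, mul_one, ← hXX]; ring


lemma pS_eq (m n : ℕ) : pS m n = gS m * Bprod m n := by
  calc pS m n = (gS m * Aprod m) * pS m n := by rw [mul_comm (gS m), A_mul_g, one_mul]
  _ = gS m * Bprod m n := by rw [mul_assoc, A_mul_p]


lemma P_eq_sum (m n s : ℕ) :
    (P m n s : ℤ) = ∑ S ∈ (range m).powerset, (-1 : ℤ) ^ S.card *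
      (if (∑ i ∈ S, (n + 1 + i)) ≤ s then (w m (s - ∑ i ∈ S, (n + 1 + i)) : ℤ) else 0) := by
  have hB : Bprod m n = ∑ S ∈ (range m).powerset,
      C ((-1) ^ S.card) * X ^ (∑ i ∈ S, (n + 1 + i)) := by
    rw [Bprod]
    have : ∀ i ∈ range m, (1 - X ^ (n + 1 + i) : PowerSeries ℤ)
        = (C (-1)) * X ^ (n + 1 + i) + 1 := by
      intro i _; simp; ring
    rw [prod_congr rfl this, prod_add]
    refine sum_congr rfl fun S hS => ?_
    rw [prod_const_one, mul_one, prod_mul_distrib, prod_const, prod_pow_eq_pow_sum, map_pow]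
  have := congrArg (fun f => coeff s f) (pS_eq m n)
  simp only [pS, coeff_mk] at this
  rw [this, hB, mul_sum, map_sum]
  refine sum_congr rfl fun S hS => ?_
  rw [show gS m * (C ((-1) ^ S.card) * X ^ (∑ i ∈ S, (n + 1 + i)))
      = C ((-1) ^ S.card) * (gS m * X ^ (∑ i ∈ S, (n + 1 + i))) by ring]
  rw [coeff_C_mul, coeff_mul_X_pow']
  simp only [gS, coeff_mk]


lemma pow_succ_sub_bounds (p : ℕ) (u : ℕ) :
    ((p : ℝ) + 1) * (u : ℝ) ^ p ≤ ((u : ℝ) + 1) ^ (p + 1) - (u : ℝ) ^ (p + 1) ∧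
    ((u : ℝ) + 1) ^ (p + 1) - (u : ℝ) ^ (p + 1) ≤ ((p : ℝ) + 1) * ((u : ℝ) + 1) ^ p := by
  have h := geom_sum₂_mul ((u : ℝ) + 1) (u : ℝ) (p + 1)
  simp only [add_sub_cancel_left, mul_one] at h
  rw [← h]
  have hu0 : (0 : ℝ) ≤ (u : ℝ) := Nat.cast_nonneg u
  have hle : (u : ℝ) ≤ (u : ℝ) + 1 := by linarith
  have hterm : ∀ i ∈ range (p + 1),
      (u : ℝ) ^ p ≤ ((u : ℝ) + 1) ^ i * (u : ℝ) ^ (p + 1 - 1 - i) ∧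
      ((u : ℝ) + 1) ^ i * (u : ℝ) ^ (p + 1 - 1 - i) ≤ ((u : ℝ) + 1) ^ p := by
    intro i hi
    rw [mem_range] at hi
    have hi' : i + (p + 1 - 1 - i) = p := by omega
    have c1 : (u : ℝ) ^ p = (u : ℝ) ^ i * (u : ℝ) ^ (p + 1 - 1 - i) := by rw [← pow_add, hi']
    have c2 : ((u : ℝ) + 1) ^ p = ((u:ℝ)+1) ^ i * ((u:ℝ)+1) ^ (p + 1 - 1 - i) := by
      rw [← pow_add, hi']
    constructor
    · rw [c1]
      exact mul_le_mul_of_nonneg_right (pow_le_pow_left₀ hu0 hle i) (pow_nonneg hu0 _)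
    · rw [c2]
      exact mul_le_mul_of_nonneg_left (pow_le_pow_left₀ hu0 hle _) (pow_nonneg (by linarith) _)
  constructor
  · have e1 : ((p : ℝ) + 1) * (u : ℝ) ^ p = ∑ _i ∈ range (p + 1), (u : ℝ) ^ p := by
      rw [sum_const, card_range]; push_cast; ring
    rw [e1]
    exact Finset.sum_le_sum (fun i hi => (hterm i hi).1)
  · have e2 : ((p : ℝ) + 1) * ((u : ℝ) + 1) ^ p = ∑ _i ∈ range (p + 1), ((u : ℝ) + 1) ^ p := by
      rw [sum_const, card_range]; push_cast; ring
    rw [e2]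
    exact Finset.sum_le_sum (fun i hi => (hterm i hi).2)


lemma sum_pow_le (p t : ℕ) :
    ((p : ℝ) + 1) * ∑ u ∈ range t, (u : ℝ) ^ p ≤ (t : ℝ) ^ (p + 1) := by
  have htel : ∑ u ∈ range t, (((u : ℝ) + 1) ^ (p + 1) - (u : ℝ) ^ (p + 1)) = (t : ℝ) ^ (p + 1) := by
    have := Finset.sum_range_sub (f := fun u : ℕ => ((u : ℝ)) ^ (p + 1)) t
    simp only [Nat.cast_add, Nat.cast_one] at this
    rw [this]
    norm_num
  rw [Finset.mul_sum, ← htel]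
  exact Finset.sum_le_sum fun u _ => (pow_succ_sub_bounds p u).1


lemma le_sum_pow (p t : ℕ) :
    (t : ℝ) ^ (p + 1) ≤ ((p : ℝ) + 1) * ((∑ u ∈ range t, (u : ℝ) ^ p) + (t : ℝ) ^ p) := by
  have htel : ∑ u ∈ range t, (((u : ℝ) + 1) ^ (p + 1) - (u : ℝ) ^ (p + 1)) = (t : ℝ) ^ (p + 1) := by
    have := Finset.sum_range_sub (f := fun u : ℕ => ((u : ℝ)) ^ (p + 1)) t
    simp only [Nat.cast_add, Nat.cast_one] at this
    rw [this]
    norm_num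
  have h1 : (t : ℝ) ^ (p + 1) ≤ ((p : ℝ) + 1) * ∑ u ∈ range t, ((u : ℝ) + 1) ^ p := by
    rw [← htel, Finset.mul_sum]
    exact Finset.sum_le_sum fun u _ => (pow_succ_sub_bounds p u).2
  have h2 : ∑ u ∈ range t, ((u : ℝ) + 1) ^ p ≤ (∑ u ∈ range t, (u : ℝ) ^ p) + (t : ℝ) ^ p := by
    have h3 : ∑ u ∈ range (t + 1), (u : ℝ) ^ p
        = (∑ u ∈ range t, ((u : ℝ) + 1) ^ p) + (0 : ℝ) ^ p := by
      rw [Finset.sum_range_succ' (fun u : ℕ => (u : ℝ) ^ p) t]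
      push_cast
      ring
    have h4 : ∑ u ∈ range (t + 1), (u : ℝ) ^ p = (∑ u ∈ range t, (u : ℝ) ^ p) + (t : ℝ) ^ p := by
      rw [Finset.sum_range_succ]
    have h5 : (0 : ℝ) ^ p ≥ 0 := by positivity
    linarith
  calc (t : ℝ) ^ (p + 1) ≤ ((p : ℝ) + 1) * ∑ u ∈ range t, ((u : ℝ) + 1) ^ p := h1
  _ ≤ _ := by
      apply mul_le_mul_of_nonneg_left h2
      positivity


lemma tendsto_sum_pow_div (p : ℕ) :
    Tendsto (fun t : ℕ => (∑ u ∈ range t, (u : ℝ) ^ p) / (t : ℝ) ^ (p + 1)) atTop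
      (nhds (1 / ((p : ℝ) + 1))) := by
  have hp : (0 : ℝ) < (p : ℝ) + 1 := by positivity
  have hlow : Tendsto (fun t : ℕ => 1 / ((p : ℝ) + 1) - 1 / (t : ℝ)) atTop
      (nhds (1 / ((p : ℝ) + 1))) := by
    have h1 := tendsto_one_div_atTop_nhds_zero_nat (𝕜 := ℝ)
    have h2 := Tendsto.sub (tendsto_const_nhds (x := 1 / ((p : ℝ) + 1)) (f := atTop)) h1
    simpa using h2
  apply tendsto_of_tendsto_of_tendsto_of_le_of_le' hlow tendsto_const_nhds
  · filter_upwards [eventually_ge_atTop 1] with t ht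
    have ht0 : (0 : ℝ) < (t : ℝ) := by exact_mod_cast ht
    have htp : (0 : ℝ) < (t : ℝ) ^ (p + 1) := by positivity
    have key : (t:ℝ)^(p+1)/((p:ℝ)+1) - (t:ℝ)^p ≤ ∑ u ∈ range t, (u : ℝ) ^ p := by
      have := le_sum_pow p t
      rw [div_sub' (ne_of_gt hp), div_le_iff₀ hp]
      nlinarith []
    have h4 : ((t:ℝ)^(p+1)/((p:ℝ)+1) - (t:ℝ)^p)/(t:ℝ)^(p+1) = 1/((p:ℝ)+1) - 1/(t:ℝ) := by
      field_simp
      ring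
    rw [← h4]
    gcongr
  · filter_upwards [eventually_ge_atTop 1] with t ht
    have ht0 : (0 : ℝ) < (t : ℝ) := by exact_mod_cast ht
    have htp : (0 : ℝ) < (t : ℝ) ^ (p + 1) := by positivity
    rw [div_le_div_iff₀ htp hp]
    nlinarith [sum_pow_le p t]


noncomputable def Bsum (d p t : ℕ) : ℝ := ∑ r ∈ range (t / d + 1), (((t - d * r : ℕ) : ℝ)) ^ p


lemma bsum_nonneg (d p t : ℕ) : 0 ≤ Bsum d p t :=
  Finset.sum_nonneg fun r _ => by positivity


lemma mem_range_div_mul_le {d t r : ℕ} (hd : 1 ≤ d) (hr : r ∈ range (t / d + 1)) : d * r ≤ t := by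
  rw [mem_range] at hr
  have h := (Nat.le_div_iff_mul_le (by omega : 0 < d)).mp (by omega : r ≤ t / d)
  rw [mul_comm] at h
  exact h


lemma bsum_upper (d p t : ℕ) (hd : 1 ≤ d) :
    (d : ℝ) * Bsum d p t ≤ ∑ u ∈ range (t + d), (u : ℝ) ^ p := by
  have h1 : (d : ℝ) * Bsum d p t
      = ∑ r ∈ range (t / d + 1), ∑ j ∈ range d, (((t - d * r : ℕ) : ℝ)) ^ p := by
    rw [Bsum, Finset.mul_sum]
    refine sum_congr rfl fun r _ => ?_
    rw [sum_const, card_range, nsmul_eq_mul]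
  have h2 : ∑ r ∈ range (t / d + 1), ∑ j ∈ range d, (((t - d * r : ℕ) : ℝ)) ^ p
      ≤ ∑ r ∈ range (t / d + 1), ∑ j ∈ range d, (((t - d * r + j : ℕ) : ℝ)) ^ p := by
    refine sum_le_sum fun r _ => sum_le_sum fun j _ => ?_
    apply pow_le_pow_left₀ (Nat.cast_nonneg _)
    exact_mod_cast Nat.le_add_right _ _
  have hinj : ∀ x ∈ (range (t / d + 1)) ×ˢ (range d), ∀ y ∈ (range (t / d + 1)) ×ˢ (range d),
      t - d * x.1 + x.2 = t - d * y.1 + y.2 → x = y := by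
    rintro ⟨r, j⟩ hm ⟨r', j'⟩ hm' heq
    rw [Finset.mem_product] at hm hm'
    have hr1 : d * r ≤ t := mem_range_div_mul_le hd hm.1
    have hr2 : d * r' ≤ t := mem_range_div_mul_le hd hm'.1
    have hj1 : j < d := mem_range.mp hm.2
    have hj2 : j' < d := mem_range.mp hm'.2
    simp only [] at heq
    have hrr : r = r' := by
      rcases lt_trichotomy r r' with h | h | h
      · exfalso
        have h5 : d * (r + 1) ≤ d * r' := Nat.mul_le_mul_left d (by omega)
        rw [Nat.mul_succ] at h5
        omega
      · exact h
      · exfalso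
        have h5 : d * (r' + 1) ≤ d * r := Nat.mul_le_mul_left d (by omega)
        rw [Nat.mul_succ] at h5
        omega
    subst hrr
    have : j = j' := by omega
    simp [this]
  have h3 : ∑ r ∈ range (t / d + 1), ∑ j ∈ range d, (((t - d * r + j : ℕ) : ℝ)) ^ p
      = ∑ v ∈ ((range (t / d + 1)) ×ˢ (range d)).image (fun q : ℕ × ℕ => t - d * q.1 + q.2),
          ((v : ℝ)) ^ p := by
    rw [Finset.sum_image hinj, Finset.sum_product]
  rw [h1]
  refine le_trans h2 ?_
  rw [h3]
  apply Finset.sum_le_sum_of_subset_of_nonneg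
  · intro v hv
    simp only [Finset.mem_image, Finset.mem_product, mem_range] at hv
    obtain ⟨⟨r, j⟩, ⟨hr, hj⟩, hv⟩ := hv
    simp only [mem_range]
    omega
  · intro v _ _
    positivity


lemma bsum_lower (d p t : ℕ) (hd : 1 ≤ d) :
    ∑ u ∈ range (t + 1), (u : ℝ) ^ p ≤ (d : ℝ) * Bsum d p t := by
  have hmap : ∀ u ∈ range (t + 1), (t - u) / d ∈ range (t / d + 1) := by
    intro u hu
    simp only [mem_range] at hu ⊢
    have : (t - u) / d ≤ t / d := Nat.div_le_div_right (by omega)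
    omega
  rw [← Finset.sum_fiberwise_of_maps_to hmap (fun u : ℕ => (u : ℝ) ^ p)]
  rw [Bsum, Finset.mul_sum]
  apply sum_le_sum
  intro r hr
  have hbound : ∀ u ∈ (range (t + 1)).filter (fun u => (t - u) / d = r),
      u ≤ t - d * r ∧ t - d * r < u + d := by
    intro u hu
    simp only [Finset.mem_filter, mem_range] at hu
    obtain ⟨hu1, hu2⟩ := hu
    have h1 : d * r ≤ t - u := by
      have h := Nat.div_mul_le_self (t - u) d
      rw [hu2, mul_comm] at h
      exact h
    have h2 : t - u < (r + 1) * d :=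
      (Nat.div_lt_iff_lt_mul (by omega : 0 < d)).mp (by omega : (t - u) / d < r + 1)
    have h3 : (r + 1) * d = d * r + d := by ring
    omega
  have hcard : ((range (t + 1)).filter (fun u => (t - u) / d = r)).card ≤ d := by
    have hsub : (range (t + 1)).filter (fun u => (t - u) / d = r)
        ⊆ Finset.Ico (t - d * r + 1 - d) (t - d * r + 1) := by
      intro u hu
      have := hbound u hu
      simp only [Finset.mem_Ico]
      omega
    calc ((range (t + 1)).filter (fun u => (t - u) / d = r)).card
        ≤ (Finset.Ico (t - d * r + 1 - d) (t - d * r + 1)).card := Finset.card_le_card hsub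
    _ = (t - d * r + 1) - (t - d * r + 1 - d) := Nat.card_Ico _ _
    _ ≤ d := by omega
  calc ∑ u ∈ (range (t + 1)).filter (fun u => (t - u) / d = r), (u : ℝ) ^ p
      ≤ ∑ u ∈ (range (t + 1)).filter (fun u => (t - u) / d = r), (((t - d * r : ℕ) : ℝ)) ^ p := by
        refine sum_le_sum fun u hu => ?_
        apply pow_le_pow_left₀ (Nat.cast_nonneg _)
        exact_mod_cast (hbound u hu).1
    _ = (((range (t + 1)).filter (fun u => (t - u) / d = r)).card : ℝ)
        * (((t - d * r : ℕ) : ℝ)) ^ p := by rw [sum_const, nsmul_eq_mul]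
    _ ≤ (d : ℝ) * (((t - d * r : ℕ) : ℝ)) ^ p := by
        apply mul_le_mul_of_nonneg_right _ (by positivity)
        exact_mod_cast hcard


lemma tendsto_bsum (d p : ℕ) (hd : 1 ≤ d) :
    Tendsto (fun t : ℕ => Bsum d p t / (t : ℝ) ^ (p + 1)) atTop
      (nhds (1 / ((d : ℝ) * ((p : ℝ) + 1)))) := by
  have hd0 : (0 : ℝ) < d := by exact_mod_cast hd
  have hp : (0 : ℝ) < (p : ℝ) + 1 := by positivity
  have hval : (1 : ℝ) / ((d : ℝ) * ((p : ℝ) + 1)) = 1 / (d : ℝ) * (1 / ((p : ℝ) + 1)) := by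
    rw [div_mul_div_comm, one_mul]
  rw [hval]
  have hshift : ∀ a : ℕ, 1 ≤ a → Tendsto (fun t : ℕ =>
      (∑ u ∈ range (t + a), (u : ℝ) ^ p) / ((d : ℝ) * (t : ℝ) ^ (p + 1))) atTop
      (nhds (1 / (d : ℝ) * (1 / ((p : ℝ) + 1)))) := by
    intro a ha
    have h1 : Tendsto (fun t : ℕ => (∑ u ∈ range (t + a), (u : ℝ) ^ p)
        / ((t + a : ℕ) : ℝ) ^ (p + 1)) atTop (nhds (1 / ((p : ℝ) + 1))) :=
      (tendsto_sum_pow_div p).comp (tendsto_add_atTop_nat a)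
    have h2 : Tendsto (fun t : ℕ => (((t + a : ℕ) : ℝ) ^ (p + 1) / (t : ℝ) ^ (p + 1))) atTop
        (nhds 1) := by
      have h3 : Tendsto (fun t : ℕ => ((t : ℝ) + a) / (t : ℝ)) atTop (nhds 1) := by
        have h4 : Tendsto (fun t : ℕ => 1 + (a : ℝ) * (1 / (t : ℝ))) atTop
            (nhds (1 + (a : ℝ) * 0)) :=
          tendsto_const_nhds.add (tendsto_const_nhds.mul tendsto_one_div_atTop_nhds_zero_nat)
        rw [mul_zero, add_zero] at h4
        apply h4.congr'
        filter_upwards [eventually_ge_atTop 1] with t ht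
        have ht0 : (t : ℝ) ≠ 0 := by positivity
        field_simp
      have h5 := h3.pow (p + 1)
      rw [one_pow] at h5
      apply h5.congr
      intro t
      rw [div_pow]
      push_cast
      ring_nf
    have h6 := (tendsto_const_nhds (x := 1 / (d : ℝ)) (f := atTop (α := ℕ))).mul (h1.mul h2)
    rw [mul_one] at h6
    apply h6.congr'
    filter_upwards [eventually_ge_atTop 1] with t ht
    have ht0 : (t : ℝ) ≠ 0 := by positivity
    have hta : ((t + a : ℕ) : ℝ) ≠ 0 := by positivity
    have htap : ((t + a : ℕ) : ℝ) ^ (p + 1) ≠ 0 := by positivity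
    field_simp
  apply tendsto_of_tendsto_of_tendsto_of_le_of_le' (hshift 1 le_rfl) (hshift d hd)
  · filter_upwards [eventually_ge_atTop 1] with t ht
    have ht0 : (0 : ℝ) < (t : ℝ) := by exact_mod_cast ht
    have htp : (0 : ℝ) < (t : ℝ) ^ (p + 1) := by positivity
    have hle := bsum_lower d p t hd
    rw [div_le_div_iff₀ (by positivity) htp]
    nlinarith [mul_le_mul_of_nonneg_right hle htp.le]
  · filter_upwards [eventually_ge_atTop 1] with t ht
    have ht0 : (0 : ℝ) < (t : ℝ) := by exact_mod_cast ht
    have htp : (0 : ℝ) < (t : ℝ) ^ (p + 1) := by positivity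
    have hle := bsum_upper d p t hd
    rw [div_le_div_iff₀ htp (by positivity)]
    nlinarith [mul_le_mul_of_nonneg_right hle htp.le]


lemma step_tendsto (d p : ℕ) (hd : 1 ≤ d) (g : ℕ → ℝ) (hg0 : ∀ t, 0 ≤ g t) (L : ℝ)
    (hL : Tendsto (fun t : ℕ => g t / (t : ℝ) ^ p) atTop (nhds L)) :
    Tendsto (fun t : ℕ => (∑ r ∈ range (t / d + 1), g (t - d * r)) / (t : ℝ) ^ (p + 1)) atTop
      (nhds (L / ((d : ℝ) * ((p : ℝ) + 1)))) := by
  have hd0 : (0 : ℝ) < d := by exact_mod_cast hd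
  have hp : (0 : ℝ) < (p : ℝ) + 1 := by positivity
  set Sg : ℕ → ℝ := fun t => ∑ r ∈ range (t / d + 1), g (t - d * r) with hSg
  have hdiff : Tendsto (fun t : ℕ => (Sg t - L * Bsum d p t) / (t : ℝ) ^ (p + 1)) atTop
      (nhds 0) := by
    rw [NormedAddCommGroup.tendsto_nhds_zero]
    intro ε hε
    set K : ℝ := 1 / ((d : ℝ) * ((p : ℝ) + 1)) + 1 with hK
    have hK0 : 0 < K := by positivity
    set ε' : ℝ := ε / (2 * K) with hε'def
    have hε'0 : 0 < ε' := by positivity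
    -- eventually Bsum / t^{p+1} < K
    have hBK : ∀ᶠ t : ℕ in atTop, Bsum d p t / (t : ℝ) ^ (p + 1) < K :=
      (tendsto_bsum d p hd).eventually_lt_const (by rw [hK]; linarith)
    -- threshold for g
    obtain ⟨T₀, hT₀⟩ := (Metric.tendsto_atTop.mp hL) ε' hε'0
    set T₁ : ℕ := max T₀ 1 with hT₁
    have hgood : ∀ u : ℕ, T₁ ≤ u → |g u - L * (u : ℝ) ^ p| ≤ ε' * (u : ℝ) ^ p := by
      intro u hu
      have hu1 : 1 ≤ u := le_trans (le_max_right _ _) hu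
      have hu0 : (0 : ℝ) < (u : ℝ) ^ p := by
        have : (0:ℝ) < (u:ℝ) := by exact_mod_cast hu1
        positivity
      have := hT₀ u (le_trans (le_max_left _ _) hu)
      rw [Real.dist_eq] at this
      have h2 : |g u / (u : ℝ) ^ p - L| * (u : ℝ) ^ p ≤ ε' * (u : ℝ) ^ p :=
        mul_le_mul_of_nonneg_right (le_of_lt this) hu0.le
      calc |g u - L * (u : ℝ) ^ p| = |g u / (u : ℝ) ^ p - L| * (u : ℝ) ^ p := by
            rw [← abs_of_pos hu0, ← abs_mul]
            congr 1
            simp only [abs_abs, abs_of_pos hu0]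
            field_simp
      _ ≤ ε' * (u : ℝ) ^ p := h2
    set C : ℝ := ∑ u ∈ range T₁, (g u + |L| * (u : ℝ) ^ p) with hC
    have hC0 : 0 ≤ C := Finset.sum_nonneg fun u _ => by have := hg0 u; positivity
    -- key pointwise bound
    have hkey : ∀ t : ℕ, |Sg t - L * Bsum d p t| ≤ ε' * Bsum d p t + C := by
      intro t
      have h1 : Sg t - L * Bsum d p t
          = ∑ r ∈ range (t / d + 1), (g (t - d * r) - L * (((t - d * r : ℕ) : ℝ)) ^ p) := by
        rw [hSg, Bsum, Finset.mul_sum, ← Finset.sum_sub_distrib]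
      rw [h1]
      refine le_trans (Finset.abs_sum_le_sum_abs _ _) ?_
      rw [← Finset.sum_filter_add_sum_filter_not (range (t / d + 1))
        (fun r => T₁ ≤ t - d * r)]
      have hgoodsum : ∑ r ∈ (range (t / d + 1)).filter (fun r => T₁ ≤ t - d * r),
          |g (t - d * r) - L * (((t - d * r : ℕ) : ℝ)) ^ p| ≤ ε' * Bsum d p t := by
        calc ∑ r ∈ (range (t / d + 1)).filter (fun r => T₁ ≤ t - d * r),
            |g (t - d * r) - L * (((t - d * r : ℕ) : ℝ)) ^ p|
            ≤ ∑ r ∈ (range (t / d + 1)).filter (fun r => T₁ ≤ t - d * r),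
              ε' * (((t - d * r : ℕ) : ℝ)) ^ p := by
              refine sum_le_sum fun r hr => ?_
              exact hgood _ (Finset.mem_filter.mp hr).2
        _ ≤ ∑ r ∈ range (t / d + 1), ε' * (((t - d * r : ℕ) : ℝ)) ^ p := by
              apply Finset.sum_le_sum_of_subset_of_nonneg (Finset.filter_subset _ _)
              intro r _ _
              positivity
        _ = ε' * Bsum d p t := by rw [Bsum, Finset.mul_sum]
      have hbadsum : ∑ r ∈ (range (t / d + 1)).filter (fun r => ¬ T₁ ≤ t - d * r),
          |g (t - d * r) - L * (((t - d * r : ℕ) : ℝ)) ^ p| ≤ C := by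
        have hFb : ∀ u : ℕ, |g u - L * (u : ℝ) ^ p| ≤ g u + |L| * (u : ℝ) ^ p := by
          intro u
          refine le_trans (abs_sub _ _) ?_
          rw [abs_of_nonneg (hg0 u), abs_mul]
          gcongr
          rw [abs_of_nonneg (by positivity)]
        have hinj : ∀ x ∈ (range (t / d + 1)).filter (fun r => ¬ T₁ ≤ t - d * r),
            ∀ y ∈ (range (t / d + 1)).filter (fun r => ¬ T₁ ≤ t - d * r),
            t - d * x = t - d * y → x = y := by
          intro x hx y hy hxy
          have hx1 : d * x ≤ t := mem_range_div_mul_le hd (Finset.mem_filter.mp hx).1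
          have hy1 : d * y ≤ t := mem_range_div_mul_le hd (Finset.mem_filter.mp hy).1
          rcases lt_trichotomy x y with h | h | h
          · exfalso
            have h5 : d * (x + 1) ≤ d * y := Nat.mul_le_mul_left d (by omega)
            rw [Nat.mul_succ] at h5
            omega
          · exact h
          · exfalso
            have h5 : d * (y + 1) ≤ d * x := Nat.mul_le_mul_left d (by omega)
            rw [Nat.mul_succ] at h5
            omega
        calc ∑ r ∈ (range (t / d + 1)).filter (fun r => ¬ T₁ ≤ t - d * r),
            |g (t - d * r) - L * (((t - d * r : ℕ) : ℝ)) ^ p|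
            ≤ ∑ r ∈ (range (t / d + 1)).filter (fun r => ¬ T₁ ≤ t - d * r),
              (g (t - d * r) + |L| * (((t - d * r : ℕ) : ℝ)) ^ p) :=
            sum_le_sum fun r _ => hFb _
        _ = ∑ v ∈ ((range (t / d + 1)).filter (fun r => ¬ T₁ ≤ t - d * r)).image
              (fun r => t - d * r), (g v + |L| * (v : ℝ) ^ p) := by
            rw [Finset.sum_image hinj]
        _ ≤ C := by
            rw [hC]
            apply Finset.sum_le_sum_of_subset_of_nonneg
            · intro v hv
              simp only [Finset.mem_image, Finset.mem_filter, mem_range, not_le] at hv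
              obtain ⟨r, ⟨_, hr2⟩, hv⟩ := hv
              simp only [mem_range]
              omega
            · intro v _ _
              have := hg0 v
              positivity
      linarith [hgoodsum, hbadsum]
    -- now conclude
    have hCt : Tendsto (fun t : ℕ => C / (t : ℝ)) atTop (nhds 0) := by
      have := tendsto_one_div_atTop_nhds_zero_nat.const_mul C
      simpa [div_eq_mul_inv] using this
    have hCev : ∀ᶠ t : ℕ in atTop, C / (t : ℝ) < ε / 2 :=
      hCt.eventually_lt_const (by positivity)
    filter_upwards [hBK, hCev, eventually_ge_atTop 1] with t hBKt hCevt ht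
    have ht0 : (0 : ℝ) < (t : ℝ) := by exact_mod_cast ht
    have htp : (0 : ℝ) < (t : ℝ) ^ (p + 1) := by positivity
    have htt : (t : ℝ) ≤ (t : ℝ) ^ (p + 1) := by
      calc (t : ℝ) = (t : ℝ) ^ 1 := by ring
      _ ≤ (t : ℝ) ^ (p + 1) := pow_le_pow_right₀ (by exact_mod_cast ht) (by omega)
    have hCt2 : C / (t : ℝ) ^ (p + 1) ≤ C / (t : ℝ) := by
      apply div_le_div_of_nonneg_left hC0 ht0 htt
    rw [Real.norm_eq_abs, abs_div, abs_of_pos htp]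
    have hεK : ε' * K = ε / 2 := by
      rw [hε'def]
      field_simp
    calc |Sg t - L * Bsum d p t| / (t : ℝ) ^ (p + 1)
        ≤ (ε' * Bsum d p t + C) / (t : ℝ) ^ (p + 1) := by gcongr; exact hkey t
    _ = ε' * (Bsum d p t / (t : ℝ) ^ (p + 1)) + C / (t : ℝ) ^ (p + 1) := by ring
    _ < ε / 2 + ε / 2 := by
        apply add_lt_add_of_le_of_lt
        · calc ε' * (Bsum d p t / (t : ℝ) ^ (p + 1)) ≤ ε' * K :=
            mul_le_mul_of_nonneg_left hBKt.le hε'0.le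
          _ = ε / 2 := hεK
        · exact lt_of_le_of_lt hCt2 hCevt
    _ = ε := by ring
  have hfinal := hdiff.add ((tendsto_bsum d p hd).const_mul L)
  rw [zero_add] at hfinal
  have hval : L * (1 / ((d : ℝ) * ((p : ℝ) + 1))) = L / ((d : ℝ) * ((p : ℝ) + 1)) :=
    mul_one_div L _
  rw [hval] at hfinal
  apply hfinal.congr'
  filter_upwards [eventually_ge_atTop 1] with t ht
  have ht0 : (t : ℝ) ≠ 0 := by positivity
  have htp : ((t : ℝ) ^ (p + 1)) ≠ 0 := by positivity
  field_simp
  rw [sub_add_cancel, hSg]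


lemma main_tendsto (m : ℕ) :
    Tendsto (fun t : ℕ => (w (m + 1) t : ℝ) / (t : ℝ) ^ m) atTop
      (nhds (1 / ((Nat.factorial m : ℝ) * (Nat.factorial (m + 1) : ℝ)))) := by
  induction m with
  | zero =>
    have : (fun t : ℕ => (w 1 t : ℝ) / (t : ℝ) ^ 0) = fun _ => 1 := by
      funext t
      rw [w_one]
      norm_num
    rw [this]
    norm_num
  | succ m ih =>
    have hstep := step_tendsto (m + 2) m (by omega) (fun u => (w (m + 1) u : ℝ))
      (fun u => Nat.cast_nonneg _) _ ih
    have hval : (1 / ((Nat.factorial m : ℝ) * (Nat.factorial (m + 1) : ℝ)))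
        / (((m + 2 : ℕ) : ℝ) * ((m : ℝ) + 1))
        = 1 / ((Nat.factorial (m + 1) : ℝ) * (Nat.factorial (m + 2) : ℝ)) := by
      rw [Nat.factorial_succ (m + 1), Nat.factorial_succ m]
      have h1 : (Nat.factorial m : ℝ) ≠ 0 := by exact_mod_cast Nat.factorial_ne_zero m
      push_cast
      field_simp
      ring
    have hcast : ((m + 2 : ℕ) : ℝ) = (m : ℝ) + 2 := by push_cast; ring
    rw [hcast] at hval
    have hfun : ∀ t : ℕ, (∑ r ∈ range (t / (m + 2) + 1), ((w (m + 1) (t - (m + 2) * r) : ℝ)))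
        = (w (m + 2) t : ℝ) := by
      intro t
      rw [w_sum (m + 1) t]
      push_cast
      rfl
    rw [show ((m + 2 : ℕ) : ℝ) = (m : ℝ) + 2 by push_cast; ring] at hstep
    apply Tendsto.congr (fun t => by rw [hfun t]) (hval ▸ hstep)


lemma tendsto_lin_sub_atTop (a c : ℕ) (ha : 1 ≤ a) :
    Tendsto (fun n : ℕ => a * n - c) atTop atTop := by
  apply tendsto_atTop_atTop.mpr
  intro b
  refine ⟨b + c, fun n hn => ?_⟩
  have : n ≤ a * n := Nat.le_mul_of_pos_left n (by omega)
  omega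


lemma scaled_tendsto (m a c : ℕ) (ha : 1 ≤ a) :
    Tendsto (fun n : ℕ => (w (m + 1) (a * n - c) : ℝ) / (n : ℝ) ^ m) atTop
      (nhds ((a : ℝ) ^ m / ((Nat.factorial m : ℝ) * (Nat.factorial (m + 1) : ℝ)))) := by
  have h1 := (main_tendsto m).comp (tendsto_lin_sub_atTop a c ha)
  have h2 : Tendsto (fun n : ℕ => (((a * n - c : ℕ) : ℝ) / (n : ℝ))) atTop (nhds (a : ℝ)) := by
    have h4 : Tendsto (fun n : ℕ => (a : ℝ) - c * (1 / (n : ℝ))) atTop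
        (nhds ((a : ℝ) - c * 0)) :=
      tendsto_const_nhds.sub (tendsto_const_nhds.mul tendsto_one_div_atTop_nhds_zero_nat)
    rw [mul_zero, sub_zero] at h4
    apply h4.congr'
    filter_upwards [eventually_ge_atTop (c + 1)] with n hn
    have hcn : c ≤ a * n := by
      have : n ≤ a * n := Nat.le_mul_of_pos_left n (by omega)
      omega
    have hn0 : (n : ℝ) ≠ 0 := by
      have : (0 : ℕ) < n := by omega
      positivity
    rw [Nat.cast_sub hcn]
    push_cast
    field_simp
  have h3 := h1.mul (h2.pow m)
  have hval : (1 / ((Nat.factorial m : ℝ) * (Nat.factorial (m + 1) : ℝ))) * (a : ℝ) ^ m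
      = (a : ℝ) ^ m / ((Nat.factorial m : ℝ) * (Nat.factorial (m + 1) : ℝ)) := by
    ring
  rw [hval] at h3
  apply h3.congr'
  filter_upwards [eventually_ge_atTop (c + 1)] with n hn
  have hn0 : (n : ℝ) ≠ 0 := by
    have : (0 : ℕ) < n := by omega
    positivity
  have hu1 : 1 ≤ a * n - c := by
    have : n ≤ a * n := Nat.le_mul_of_pos_left n (by omega)
    omega
  have hu0 : ((a * n - c : ℕ) : ℝ) ≠ 0 := by
    have : (0 : ℕ) < a * n - c := by omega
    positivity
  simp only [Function.comp]
  rw [div_pow]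
  field_simp


/-- for even `m = 2k`, the central Gaussian polynomial coefficient grows
like `n^{m−1}` with leading coefficient `A_{m−1,k}/((m−1)!·m!)`, where
`A_{m−1,k} = Σ_{j=0}^{k} (−1)^j binom(m,j) (k−j)^{m−1}` is an Eulerian number of type A. -/

theorem gaussian_max_leading_term_even (k : ℕ) (hk : 1 ≤ k) :
    Filter.Tendsto
      (fun n : ℕ => (P (2 * k) n (k * n) : ℝ) / (n : ℝ) ^ (2 * k - 1))
      Filter.atTop
      (nhds ((∑ j ∈ Finset.range (k + 1),
          (-1 : ℝ) ^ j * (Nat.choose (2 * k) j : ℝ) * ((k - j : ℕ) : ℝ) ^ (2 * k - 1)) /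
        ((Nat.factorial (2 * k - 1) : ℝ) * (Nat.factorial (2 * k) : ℝ)))) := by
  set m : ℕ := 2 * k - 1 with hm
  have h2k : 2 * k = m + 1 := by omega
  set D : ℝ := (Nat.factorial (2 * k - 1) : ℝ) * (Nat.factorial (2 * k) : ℝ) with hD
  have hD0 : D ≠ 0 := by
    rw [hD]
    have := Nat.factorial_ne_zero (2 * k - 1)
    have := Nat.factorial_ne_zero (2 * k)
    positivity
  -- real-valued identity
  have hident : ∀ n : ℕ, (P (2 * k) n (k * n) : ℝ) = ∑ S ∈ (range (2 * k)).powerset,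
      (-1 : ℝ) ^ S.card * (if (∑ i ∈ S, (n + 1 + i)) ≤ k * n
        then ((w (2 * k) (k * n - ∑ i ∈ S, (n + 1 + i)) : ℕ) : ℝ) else 0) := by
    intro n
    have := congrArg (fun z : ℤ => (z : ℝ)) (P_eq_sum (2 * k) n (k * n))
    push_cast at this
    convert this using 2
  -- per-subset limit
  have hterm : ∀ S ∈ (range (2 * k)).powerset,
      Tendsto (fun n : ℕ => ((-1 : ℝ) ^ S.card * (if (∑ i ∈ S, (n + 1 + i)) ≤ k * n
        then ((w (2 * k) (k * n - ∑ i ∈ S, (n + 1 + i)) : ℕ) : ℝ) else 0)) / (n : ℝ) ^ m)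
        atTop (nhds ((-1 : ℝ) ^ S.card * (((k - S.card : ℕ) : ℝ) ^ m / D))) := by
    intro S hS
    set j : ℕ := S.card with hj
    set cS : ℕ := ∑ i ∈ S, (1 + i) with hcS
    have hsum : ∀ n : ℕ, ∑ i ∈ S, (n + 1 + i) = j * n + cS := by
      intro n
      rw [hcS, hj]
      rw [show (fun i => n + 1 + i) = (fun i => n + (1 + i)) from funext fun i => by omega]
      rw [Finset.sum_add_distrib, Finset.sum_const, smul_eq_mul]
    have hcSj : j ≤ cS := by
      rw [hcS, hj]
      calc S.card = ∑ _i ∈ S, 1 := by rw [Finset.sum_const, smul_eq_mul, mul_one]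
      _ ≤ ∑ i ∈ S, (1 + i) := Finset.sum_le_sum fun i _ => by omega
    by_cases hjk : j < k
    · -- main terms
      set a : ℕ := k - j with ha
      have ha1 : 1 ≤ a := by omega
      have hbase := (scaled_tendsto m a cS ha1).const_mul ((-1 : ℝ) ^ j)
      have hDval : ((a : ℝ) ^ m / ((Nat.factorial m : ℝ) * (Nat.factorial (m + 1) : ℝ)))
          = ((k - j : ℕ) : ℝ) ^ m / D := by
        rw [hD, ← h2k, ha, hm]
      rw [hDval] at hbase
      apply hbase.congr'
      filter_upwards [eventually_ge_atTop (cS + 1)] with n hn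
      have hcond : j * n + cS ≤ k * n ∧ k * n - (j * n + cS) = a * n - cS := by
        have hkn : j * n + a * n = k * n := by
          rw [← Nat.add_mul]
          congr 1
          omega
        have : cS ≤ a * n := by
          have : n ≤ a * n := Nat.le_mul_of_pos_left n (by omega)
          omega
        omega
      rw [hsum n, if_pos hcond.1, hcond.2, ← h2k]
      ring
    · -- vanishing terms
      have hzero : ∀ n : ℕ, ¬ (∑ i ∈ S, (n + 1 + i)) ≤ k * n := by
        intro n
        rw [hsum n]
        have hj1 : 1 ≤ j := by omega
        have hcS1 : 1 ≤ cS := by omega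
        have : k * n ≤ j * n := Nat.mul_le_mul_right n (by omega)
        omega
      have hlim0 : ((k - j : ℕ) : ℝ) ^ m = 0 := by
        rw [show k - j = 0 by omega]
        rw [Nat.cast_zero]
        exact zero_pow (by omega)
      have : (fun n : ℕ => ((-1 : ℝ) ^ S.card * (if (∑ i ∈ S, (n + 1 + i)) ≤ k * n
          then ((w (2 * k) (k * n - ∑ i ∈ S, (n + 1 + i)) : ℕ) : ℝ) else 0)) / (n : ℝ) ^ m)
          = fun _ => 0 := by
        funext n
        rw [if_neg (hzero n)]
        simp
      rw [this, hlim0]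
      simp [tendsto_const_nhds]
  -- sum of limits
  have hsumlim := tendsto_finset_sum ((range (2 * k)).powerset) hterm
  -- identify the limit value
  have hvalue : ∑ S ∈ (range (2 * k)).powerset,
      (-1 : ℝ) ^ S.card * (((k - S.card : ℕ) : ℝ) ^ m / D)
      = (∑ j ∈ Finset.range (k + 1),
          (-1 : ℝ) ^ j * (Nat.choose (2 * k) j : ℝ) * ((k - j : ℕ) : ℝ) ^ (2 * k - 1)) / D := by
    rw [Finset.sum_powerset_apply_card
      (f := fun j => (-1 : ℝ) ^ j * (((k - j : ℕ) : ℝ) ^ m / D)), Finset.card_range]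
    rw [Finset.sum_div]
    rw [← Finset.sum_subset (h := fun j (hj : j ∈ Finset.range (k + 1)) =>
      Finset.mem_range.mpr (by have := Finset.mem_range.mp hj; omega))]
    · refine Finset.sum_congr rfl fun j hj => ?_
      rw [nsmul_eq_mul, hm]
      ring
    · intro j hj hj2
      rw [Finset.mem_range] at hj
      rw [Finset.mem_range, not_lt] at hj2
      have : ((k - j : ℕ) : ℝ) = 0 := by
        rw [show k - j = 0 by omega, Nat.cast_zero]
      rw [this, zero_pow (by omega : m ≠ 0)]
      simp
  rw [← hvalue]
  apply hsumlim.congr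
  intro n
  rw [hident n, Finset.sum_div]
end
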